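/- arXiv:1310.7677 — 7 statements merged into one kernel-verified Lean document; each statement's English description precedes it below -/
import Mathlib

section
/- Under the CFL-type condition Δt/h^α ≤ 1/(2 ε C_α (1 + 1/α − ζ(α−1))), the third-order TVD Runge-Kutta time discretization of the semi-discrete absorbing scheme satisfies the discrete maximum principle: if M ≥ 0 and 0 ≤ P^0_j ≤ M for all j ∈ ℤ (with P^0_j = 0 for |j| ≥ J), then for every n ≥ 0 and every j ∈ ℤ one has 0 ≤ P^n_j ≤ M, where P^{n+1} = (1/3)P^n + (2/3)U^{(2)} + (2/3)Δt R(U^{(2)}), U^{(2)} = (3/4)P^n + (1/4)U^{(1)} + (1/4)Δt R(U^{(1)}), U^{(1)} = P^n + Δt R(P^n). -/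
open scoped BigOperators

/-- The constant `C_α = α Γ((1+α)/2) / (2^{1-α} √π Γ(1-α/2))`. -/
noncomputable def Cconst (α : ℝ) : ℝ :=
  α * Real.Gamma ((1 + α) / 2) /
    ((2 : ℝ) ^ (1 - α) * Real.sqrt Real.pi * Real.Gamma (1 - α / 2))

/-- The real value of the Riemann zeta function at a real argument. -/
noncomputable def zetaR (s : ℝ) : ℝ := (riemannZeta (s : ℂ)).re

/-- The double-primed sum `Σ''_{k=a, k≠0}^{b} g(k)`: the sum over integers `a ≤ k ≤ b`,
omitting `k = 0`, where the end terms `k = a` and `k = b` carry weight `1/2`. -/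
noncomputable def dsum (a b : ℤ) (g : ℤ → ℝ) : ℝ :=
  ∑ k ∈ (Finset.Icc a b).erase 0, (if k = a ∨ k = b then (1 : ℝ) / 2 else 1) * g k

/-- The semi-discrete operator `R` for the absorbing condition. -/
noncomputable def Rabs (α ε h : ℝ) (J : ℤ) (U : ℤ → ℝ) : ℤ → ℝ := fun j =>
  if |j| < J then
    -(ε * Cconst α * zetaR (α - 1) * h ^ (-α)) * (U (j - 1) - 2 * U j + U (j + 1))
      - ε * Cconst α / α *
          ((1 + (j : ℝ) * h) ^ (-α) + (1 - (j : ℝ) * h) ^ (-α)) * U j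
      + ε * Cconst α * h *
          dsum (-J - j) (J - j) (fun k => (U (j + k) - U j) / |(k : ℝ) * h| ^ (1 + α))
  else 0

/-! ### Auxiliary facts -/

lemma Cconst_pos {α : ℝ} (h1 : 0 < α) (h2 : α < 2) : 0 < Cconst α := by
  have g1 : 0 < Real.Gamma ((1 + α) / 2) := Real.Gamma_pos_of_pos (by linarith)
  have g2 : 0 < Real.Gamma (1 - α / 2) := Real.Gamma_pos_of_pos (by linarith)
  have p1 : (0:ℝ) < (2:ℝ) ^ (1 - α) := Real.rpow_pos_of_pos (by norm_num) _
  have p2 : 0 < Real.sqrt Real.pi := Real.sqrt_pos.mpr Real.pi_pos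
  exact div_pos (by positivity) (by positivity)

/-! ### Bounds on the real zeta function on `(-1,1)` -/

lemma zeta_real_repr {s : ℝ} (hs : 1 < s) :
    ∃ r : ℝ, 0 < r ∧ riemannZeta (s : ℂ) = (r : ℂ) := by
  refine ⟨∑' n : ℕ, 1 / (n : ℝ) ^ s, ?_, ?_⟩
  · refine Summable.tsum_pos (Real.summable_one_div_nat_rpow.mpr hs) (fun i => by positivity) 1 ?_
    norm_num
  · rw [zeta_eq_tsum_one_div_nat_cpow (by simpa using hs), Complex.ofReal_tsum]
    refine tsum_congr fun n => ?_
    rw [Complex.ofReal_div, Complex.ofReal_one, Complex.ofReal_cpow (Nat.cast_nonneg n),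
      Complex.ofReal_natCast]

lemma zetaR_nonpos_of_neg {s : ℝ} (h1 : -1 < s) (h0 : s < 0) : zetaR s ≤ 0 := by
  set u : ℝ := 1 - s with hu
  have hu1 : 1 < u := by simp [hu]; linarith
  have hu2 : u < 2 := by simp [hu]; linarith
  obtain ⟨r, hr, hζ⟩ := zeta_real_repr hu1
  have hfe := riemannZeta_one_sub (s := (u : ℂ))
    (fun n => by
      intro hcon
      have : (u:ℂ).re = ((-(n:ℂ)).re) := by rw [hcon]
      simp at this
      have : (0:ℝ) ≤ (n:ℝ) := Nat.cast_nonneg n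
      linarith)
    (by
      intro hcon
      have : u = 1 := by exact_mod_cast hcon
      linarith)
  have hcast : (1 : ℂ) - (u : ℝ) = ((s : ℝ) : ℂ) := by
    push_cast [hu]; ring
  rw [hcast, hζ] at hfe
  have h2π : (2 : ℂ) * (Real.pi : ℂ) = ((2 * Real.pi : ℝ) : ℂ) := by push_cast; ring
  have hexp : -(u : ℂ) = ((-u : ℝ) : ℂ) := by push_cast; ring
  have hcpow : ((2 : ℂ) * (Real.pi : ℂ)) ^ (-(u : ℂ)) = (((2 * Real.pi) ^ (-u) : ℝ) : ℂ) := by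
    rw [h2π, hexp, Complex.ofReal_cpow (by positivity)]
  have hGamma : Complex.Gamma (u : ℂ) = ((Real.Gamma u : ℝ) : ℂ) := Complex.Gamma_ofReal u
  have hcosarg : (Real.pi : ℂ) * (u : ℂ) / 2 = ((Real.pi * u / 2 : ℝ) : ℂ) := by push_cast; ring
  have hcos : Complex.cos ((Real.pi : ℂ) * (u : ℂ) / 2)
      = ((Real.cos (Real.pi * u / 2) : ℝ) : ℂ) := by
    rw [hcosarg, Complex.ofReal_cos]
  rw [hcpow, hGamma, hcos] at hfe
  have : riemannZeta ((s : ℝ) : ℂ)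
      = (((2 * ((2 * Real.pi) ^ (-u)) * Real.Gamma u * Real.cos (Real.pi * u / 2) * r : ℝ)) : ℂ) := by
    rw [hfe]; push_cast; ring
  have hre : zetaR s = 2 * ((2 * Real.pi) ^ (-u)) * Real.Gamma u * Real.cos (Real.pi * u / 2) * r := by
    rw [zetaR, this, Complex.ofReal_re]
  rw [hre]
  have hcosneg : Real.cos (Real.pi * u / 2) < 0 := by
    apply Real.cos_neg_of_pi_div_two_lt_of_lt
    · nlinarith [Real.pi_pos]
    · nlinarith [Real.pi_pos]
  have hpos : 0 < 2 * ((2 * Real.pi) ^ (-u)) * Real.Gamma u := by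
    have := Real.Gamma_pos_of_pos (show (0:ℝ) < u by linarith)
    have : (0:ℝ) < (2 * Real.pi) ^ (-u) := Real.rpow_pos_of_pos (by positivity) _
    positivity
  have : 2 * ((2 * Real.pi) ^ (-u)) * Real.Gamma u * Real.cos (Real.pi * u / 2) * r
      = (2 * ((2 * Real.pi) ^ (-u)) * Real.Gamma u) * (Real.cos (Real.pi * u / 2) * r) := by ring
  rw [this]
  exact (mul_neg_of_pos_of_neg hpos (mul_neg_of_neg_of_pos hcosneg hr)).le

section ZetaStrip

open Complex


lemma summable_shift_rpow {p : ℝ} (hp : p < -1) : Summable (fun n : ℕ => ((n:ℝ)+1) ^ p) := by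
  have h1 := (Real.summable_nat_rpow (p := p)).2 hp
  have h2 := h1.comp_injective Nat.succ_injective
  exact h2.congr fun n => by push_cast [Function.comp]; norm_num

lemma cpow_diff_bound {δ : ℝ} (hδ : 0 < δ) {z : ℂ} (hre : δ ≤ z.re) (hz4 : ‖z‖ ≤ 4)
    {a : ℝ} (ha : 1 ≤ a) :
    ‖(a:ℂ)^(-z) - ((a+1:ℝ):ℂ)^(-z)‖ ≤ 4 * a ^ (-δ-1) := by
  have ha0 : (0:ℝ) < a := lt_of_lt_of_le one_pos ha
  have hz0 : z ≠ 0 := by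
    intro h; rw [h] at hre; simp at hre; linarith
  have hznz : -z ≠ 0 := neg_ne_zero.mpr hz0
  set φ : ℝ → ℂ := fun x => (x:ℂ)^(-z) with hφ
  have hderiv : ∀ x ∈ Set.Icc a (a+1),
      HasDerivWithinAt φ (-z * (x:ℂ)^(-z-1)) (Set.Icc a (a+1)) x := by
    intro x hx
    have hx0 : (0:ℝ) < x := lt_of_lt_of_le ha0 hx.1
    have h1 : HasDerivAt (fun y:ℝ => (y:ℂ)^(-z-1+1)/(-z-1+1)) ((x:ℂ)^(-z-1)) x :=
      hasDerivAt_ofReal_cpow_const' hx0.ne' (by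
        intro hcon
        apply hz0
        linear_combination -hcon)
    simp only [show (-z-1+1 : ℂ) = -z from by ring] at h1
    have h2 := h1.const_mul (-z)
    have hfun : (fun y:ℝ => -z * ((y:ℂ)^(-z) / (-z))) = φ := by
      funext y
      rw [mul_comm, div_mul_cancel₀ _ hznz]
    rw [hfun] at h2
    exact h2.hasDerivWithinAt
  have hbound : ∀ x ∈ Set.Icc a (a+1), ‖-z * (x:ℂ)^(-z-1)‖ ≤ 4 * a ^ (-δ-1) := by
    intro x hx
    have hx0 : (0:ℝ) < x := lt_of_lt_of_le ha0 hx.1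
    have hx1 : (1:ℝ) ≤ x := le_trans ha hx.1
    rw [norm_mul, norm_neg]
    have h1 : ‖(x:ℂ)^(-z-1)‖ = x ^ ((-z-1).re) := by
      rw [Complex.norm_cpow_eq_rpow_re_of_pos hx0]
    have hre' : (-z-1).re = -z.re - 1 := by simp
    rw [h1, hre']
    have h2 : x ^ (-z.re - 1) ≤ x ^ (-δ-1) :=
      Real.rpow_le_rpow_of_exponent_le hx1 (by linarith)
    have h3 : x ^ (-δ-1) ≤ a ^ (-δ-1) :=
      Real.rpow_le_rpow_of_nonpos ha0 hx.1 (by linarith)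
    have h4 : (0:ℝ) ≤ x ^ (-z.re - 1) := Real.rpow_nonneg hx0.le _
    exact mul_le_mul hz4 (h2.trans h3) h4 (by norm_num)
  have hmvt := (convex_Icc a (a+1)).norm_image_sub_le_of_norm_hasDerivWithin_le
    hderiv hbound (Set.left_mem_Icc.mpr (by linarith)) (Set.right_mem_Icc.mpr (by linarith))
  -- hmvt : ‖φ (a+1) - φ a‖ ≤ 4*a^(-δ-1) * ‖(a+1) - a‖
  have hval : ‖φ (a+1) - φ a‖ = ‖(a:ℂ)^(-z) - ((a+1:ℝ):ℂ)^(-z)‖ := by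
    rw [norm_sub_rev]
  have hone : ‖(a+1) - a‖ = (1:ℝ) := by norm_num
  rw [hval, hone, mul_one] at hmvt
  exact hmvt

lemma strip_identity {z : ℂ} (hz : 1 < z.re) :
    (1 - (2:ℂ)^((1:ℂ) - z)) * riemannZeta z
      = ∑' i : ℕ, (((2*(i:ℝ)+1 : ℝ) : ℂ)^(-z) - ((2*(i:ℝ)+2 : ℝ) : ℂ)^(-z)) := by
  set F : ℕ → ℂ := fun m => (((m:ℝ)+1 : ℝ) : ℂ)^(-z) with hFdef
  have hnorm : ∀ m : ℕ, ‖F m‖ = ((m:ℝ)+1) ^ (-z.re) := by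
    intro m
    have h0 : (0:ℝ) < (m:ℝ)+1 := by positivity
    rw [hFdef, Complex.norm_cpow_eq_rpow_re_of_pos h0]
    simp
  have hF : Summable F := by
    apply Summable.of_norm
    exact (summable_shift_rpow (by linarith : -z.re < -1)).congr fun m => (hnorm m).symm
  have hζs : riemannZeta z = ∑' m : ℕ, F m := by
    rw [zeta_eq_tsum_one_div_nat_add_one_cpow hz]
    refine tsum_congr fun n => ?_
    show 1 / ((n:ℂ) + 1) ^ z = (((n:ℝ)+1 : ℝ) : ℂ)^(-z)
    have e : (((n:ℝ)+1 : ℝ) : ℂ) = ((n:ℂ)+1) := by push_cast; ring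
    rw [e, Complex.cpow_neg, one_div]
  have hFo : Summable (fun k : ℕ => F (2*k)) :=
    hF.comp_injective (fun a b hab => by omega)
  have hFe : Summable (fun k : ℕ => F (2*k+1)) :=
    hF.comp_injective (fun a b hab => by omega)
  have hsplit : (∑' k : ℕ, F (2*k)) + (∑' k : ℕ, F (2*k+1)) = ∑' m : ℕ, F m :=
    tsum_even_add_odd hFo hFe
  have hpow : (2:ℂ)^((1:ℂ) - z) = 2 * (2:ℂ)^(-z) := by
    rw [show (1:ℂ) - z = 1 + -z by ring, Complex.cpow_add _ _ (two_ne_zero), Complex.cpow_one]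
  have hmul : ∀ m : ℕ, (2:ℂ)^(-z) * F m = F (2*m+1) := by
    intro m
    have key := mul_cpow_ofReal_nonneg (by norm_num : (0:ℝ) ≤ 2)
      (by positivity : (0:ℝ) ≤ (m:ℝ)+1) (-z)
    calc (2:ℂ)^(-z) * F m = (((2:ℝ):ℂ))^(-z) * ((((m:ℝ)+1 : ℝ)):ℂ)^(-z) := by
          norm_num [hFdef]
      _ = (((2:ℝ):ℂ) * ((((m:ℝ)+1 : ℝ)):ℂ))^(-z) := key.symm
      _ = F (2*m+1) := by
          rw [hFdef]
          congr 1
          push_cast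
          ring
  have h2ζ : (2:ℂ)^((1:ℂ) - z) * riemannZeta z = 2 * ∑' k : ℕ, F (2*k+1) := by
    rw [hpow, hζs, mul_assoc, ← tsum_mul_left]
    congr 1
    exact tsum_congr hmul
  have hA : (∑' i : ℕ, (((2*(i:ℝ)+1 : ℝ) : ℂ)^(-z) - ((2*(i:ℝ)+2 : ℝ) : ℂ)^(-z)))
      = (∑' k : ℕ, F (2*k)) - (∑' k : ℕ, F (2*k+1)) := by
    rw [← Summable.tsum_sub hFo hFe]
    refine tsum_congr fun i => ?_
    rw [hFdef]
    congr 2 <;> push_cast <;> ring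
  rw [hA, sub_mul, one_mul, h2ζ, hζs, ← hsplit]
  ring

lemma strip_preconnected {δ : ℝ} (hδ0 : 0 < δ) (hδ1 : δ < 1) :
    IsPreconnected ({z : ℂ | δ < z.re ∧ z.re < 3 ∧ -1 < z.im ∧ z.im < 1} \ {1}) := by
  set X1 : Set ℂ := {z | δ < z.re ∧ z.re < 1 ∧ -1 < z.im ∧ z.im < 1} with hX1
  set X2 : Set ℂ := {z | 1 < z.re ∧ z.re < 3 ∧ -1 < z.im ∧ z.im < 1} with hX2
  set X3 : Set ℂ := {z | δ < z.re ∧ z.re < 3 ∧ 0 < z.im ∧ z.im < 1} with hX3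
  set X4 : Set ℂ := {z | δ < z.re ∧ z.re < 3 ∧ -1 < z.im ∧ z.im < 0} with hX4
  have hconv : ∀ (a b c d : ℝ), Convex ℝ {z : ℂ | a < z.re ∧ z.re < b ∧ c < z.im ∧ z.im < d} := by
    intro a b c d
    have : {z : ℂ | a < z.re ∧ z.re < b ∧ c < z.im ∧ z.im < d}
        = {z : ℂ | a < z.re} ∩ ({z : ℂ | z.re < b} ∩ ({z : ℂ | c < z.im} ∩ {z : ℂ | z.im < d})) := by
      ext w; simp only [Set.mem_setOf_eq, Set.mem_inter_iff]
    rw [this]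
    exact (convex_halfSpace_re_gt a).inter ((convex_halfSpace_re_lt b).inter
      ((convex_halfSpace_im_gt c).inter (convex_halfSpace_im_lt d)))
  have p13 : (⟨(δ+1)/2, 1/2⟩ : ℂ) ∈ X1 ∩ X3 := by
    refine ⟨⟨?_, ?_, ?_, ?_⟩, ?_, ?_, ?_, ?_⟩ <;> show _ < _ <;> norm_num <;> linarith
  have p23 : (⟨2, 1/2⟩ : ℂ) ∈ (X1 ∪ X3) ∩ X2 := by
    refine ⟨Or.inr ⟨?_, ?_, ?_, ?_⟩, ?_, ?_, ?_, ?_⟩ <;> show _ < _ <;> norm_num <;> linarith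
  have p14 : (⟨(δ+1)/2, -1/2⟩ : ℂ) ∈ ((X1 ∪ X3) ∪ X2) ∩ X4 := by
    refine ⟨Or.inl (Or.inl ⟨?_, ?_, ?_, ?_⟩), ?_, ?_, ?_, ?_⟩ <;> show _ < _ <;>
      norm_num <;> linarith
  have h13 : IsPreconnected (X1 ∪ X3) :=
    IsPreconnected.union _ p13.1 p13.2 (hconv _ _ _ _).isPreconnected (hconv _ _ _ _).isPreconnected
  have h132 : IsPreconnected ((X1 ∪ X3) ∪ X2) :=
    IsPreconnected.union _ p23.1 p23.2 h13 (hconv _ _ _ _).isPreconnected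
  have h1324 : IsPreconnected (((X1 ∪ X3) ∪ X2) ∪ X4) :=
    IsPreconnected.union _ p14.1 p14.2 h132 (hconv _ _ _ _).isPreconnected
  have hset : {z : ℂ | δ < z.re ∧ z.re < 3 ∧ -1 < z.im ∧ z.im < 1} \ {1}
      = ((X1 ∪ X3) ∪ X2) ∪ X4 := by
    ext w
    simp only [Set.mem_diff, Set.mem_setOf_eq, Set.mem_singleton_iff, Set.mem_union,
      hX1, hX2, hX3, hX4]
    constructor
    · rintro ⟨⟨h1, h2, h3, h4⟩, hne⟩
      rcases lt_trichotomy w.im 0 with him | him | him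
      · right; exact ⟨h1, h2, h3, him⟩
      · rcases lt_trichotomy w.re 1 with hre | hre | hre
        · left; left; left; exact ⟨h1, hre, h3, h4⟩
        · exfalso; apply hne; exact Complex.ext (by simpa using hre) (by simpa using him)
        · left; right; exact ⟨hre, h2, h3, h4⟩
      · left; left; right; exact ⟨h1, h2, him, h4⟩
    · rintro (((⟨h1, h2, h3, h4⟩ | ⟨h1, h2, h3, h4⟩) | ⟨h1, h2, h3, h4⟩) | ⟨h1, h2, h3, h4⟩)
      · exact ⟨⟨h1, by linarith, h3, h4⟩, fun hc => by
          rw [hc] at h2; simp at h2⟩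
      · exact ⟨⟨h1, h2, by linarith, h4⟩, fun hc => by
          rw [hc] at h3; simp at h3⟩
      · exact ⟨⟨by linarith, h2, h3, h4⟩, fun hc => by
          rw [hc] at h1; simp at h1⟩
      · exact ⟨⟨h1, h2, h3, by linarith⟩, fun hc => by
          rw [hc] at h4; simp at h4⟩
  rw [hset]
  exact h1324

lemma zetaR_nonpos_of_pos {s₀ : ℝ} (h0 : 0 < s₀) (h1 : s₀ < 1) : zetaR s₀ ≤ 0 := by
  set δ : ℝ := s₀ / 2 with hδdef
  have hδ0 : 0 < δ := by positivity
  have hδ1 : δ < 1 := by rw [hδdef]; linarith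
  set U : Set ℂ := {z : ℂ | δ < z.re ∧ z.re < 3 ∧ -1 < z.im ∧ z.im < 1} \ {1} with hUdef
  have hUopen : IsOpen U := by
    apply IsOpen.sdiff _ isClosed_singleton
    have : {z : ℂ | δ < z.re ∧ z.re < 3 ∧ -1 < z.im ∧ z.im < 1}
        = (Complex.re ⁻¹' (Set.Ioo δ 3)) ∩ (Complex.im ⁻¹' (Set.Ioo (-1) 1)) := by
      ext w
      simp only [Set.mem_setOf_eq, Set.mem_inter_iff, Set.mem_preimage, Set.mem_Ioo]
      tauto
    rw [this]
    exact (isOpen_Ioo.preimage Complex.continuous_re).inter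
      (isOpen_Ioo.preimage Complex.continuous_im)
  have hUconn : IsPreconnected U := strip_preconnected hδ0 hδ1
  set f : ℕ → ℂ → ℂ := fun i z =>
    ((2*(i:ℝ)+1 : ℝ) : ℂ)^(-z) - ((2*(i:ℝ)+2 : ℝ) : ℂ)^(-z) with hfdef
  set u : ℕ → ℝ := fun i => 4 * (2*(i:ℝ)+1) ^ (-δ-1) with hudef
  have hbase : ∀ i : ℕ, (1:ℝ) ≤ 2*(i:ℝ)+1 := by
    intro i
    have : (0:ℝ) ≤ (i:ℝ) := Nat.cast_nonneg i
    linarith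
  have hu : Summable u := by
    apply Summable.mul_left
    refine Summable.of_nonneg_of_le (fun i => Real.rpow_nonneg (by linarith [hbase i]) _)
      (fun i => ?_) (summable_shift_rpow (p := -δ-1) (by linarith))
    exact Real.rpow_le_rpow_of_nonpos (by positivity) (by linarith [hbase i]) (by linarith)
  have hfb : ∀ (i : ℕ) (z : ℂ), z ∈ U → ‖f i z‖ ≤ u i := by
    intro i z hz
    obtain ⟨⟨hz1, hz2, hz3, hz4⟩, -⟩ := hz
    have hre : δ ≤ z.re := hz1.le
    have hnz : ‖z‖ ≤ 4 := by
      have hb := Complex.norm_le_abs_re_add_abs_im z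
      have h5 : |z.re| ≤ 3 := abs_le.mpr ⟨by linarith, hz2.le⟩
      have h6 : |z.im| ≤ 1 := abs_le.mpr ⟨hz3.le, hz4.le⟩
      linarith
    have e : ((2*(i:ℝ)+2 : ℝ) : ℂ) = ((2*(i:ℝ)+1) + 1 : ℝ) := by push_cast; ring
    rw [hfdef]
    show ‖((2*(i:ℝ)+1 : ℝ) : ℂ)^(-z) - ((2*(i:ℝ)+2 : ℝ) : ℂ)^(-z)‖ ≤ u i
    rw [e]
    exact cpow_diff_bound hδ0 hre hnz (hbase i)
  have hfd : ∀ i : ℕ, DifferentiableOn ℂ (f i) U := by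
    intro i
    apply DifferentiableOn.sub
    · apply Differentiable.differentiableOn
      apply Differentiable.const_cpow differentiable_neg
      left
      exact_mod_cast ne_of_gt (lt_of_lt_of_le zero_lt_one (hbase i))
    · apply Differentiable.differentiableOn
      apply Differentiable.const_cpow differentiable_neg
      left
      have : (0:ℝ) < 2*(i:ℝ)+2 := by linarith [hbase i]
      exact_mod_cast ne_of_gt this
  have hAdiff : DifferentiableOn ℂ (fun z => ∑' i : ℕ, f i z) U :=
    differentiableOn_tsum_of_summable_norm hu hfd hUopen hfb
  set g : ℂ → ℂ := fun z => (1 - (2:ℂ)^((1:ℂ) - z)) * riemannZeta z with hgdef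
  have hgdiff : DifferentiableOn ℂ g U := by
    intro z hz
    have hz1 : z ≠ 1 := hz.2
    apply DifferentiableAt.differentiableWithinAt
    apply DifferentiableAt.mul
    · apply DifferentiableAt.sub (differentiableAt_const _)
      exact DifferentiableAt.const_cpow ((differentiableAt_const _).sub differentiableAt_id)
        (Or.inl two_ne_zero)
    · exact differentiableAt_riemannZeta hz1
  have h2U : (2:ℂ) ∈ U := by
    refine ⟨⟨?_, ?_, ?_, ?_⟩, ?_⟩
    · show δ < (2:ℂ).re; simp; linarith
    · show (2:ℂ).re < 3; simp; norm_num
    · show (-1:ℝ) < (2:ℂ).im; simp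
    · show (2:ℂ).im < 1; simp
    · simp only [Set.mem_singleton_iff]; norm_num
  have heqon : Set.EqOn g (fun z => ∑' i : ℕ, f i z) U := by
    apply AnalyticOnNhd.eqOn_of_preconnected_of_frequently_eq
      (hgdiff.analyticOnNhd hUopen) (hAdiff.analyticOnNhd hUopen) hUconn h2U
    apply Filter.Eventually.frequently
    apply Filter.Eventually.filter_mono nhdsWithin_le_nhds
    have hopen : IsOpen {z : ℂ | 1 < z.re} := isOpen_lt continuous_const Complex.continuous_re
    filter_upwards [hopen.mem_nhds (by simp : (2:ℂ) ∈ {z : ℂ | 1 < z.re})] with z hz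
    exact strip_identity hz
  have hs₀U : ((s₀ : ℝ) : ℂ) ∈ U := by
    refine ⟨⟨?_, ?_, ?_, ?_⟩, ?_⟩
    · show δ < (Complex.ofReal s₀).re; simp [hδdef]; linarith
    · show (Complex.ofReal s₀).re < 3; simp; linarith
    · show (-1:ℝ) < (Complex.ofReal s₀).im; simp
    · show (Complex.ofReal s₀).im < 1; simp
    · simp only [Set.mem_singleton_iff]
      intro hc
      have : s₀ = 1 := by exact_mod_cast hc
      linarith
  have hval := heqon hs₀U
  -- real computation of A s₀
  set T : ℝ := ∑' i : ℕ, ((2*(i:ℝ)+1) ^ (-s₀) - (2*(i:ℝ)+2) ^ (-s₀)) with hTdef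
  have hterm : ∀ i : ℕ, f i ((s₀ : ℝ) : ℂ)
      = (((2*(i:ℝ)+1) ^ (-s₀) - (2*(i:ℝ)+2) ^ (-s₀) : ℝ) : ℂ) := by
    intro i
    have e1 : (0:ℝ) ≤ 2*(i:ℝ)+1 := by linarith [hbase i]
    have e2 : (0:ℝ) ≤ 2*(i:ℝ)+2 := by linarith [hbase i]
    rw [hfdef]
    show ((2*(i:ℝ)+1 : ℝ) : ℂ)^(-((s₀:ℝ):ℂ)) - ((2*(i:ℝ)+2 : ℝ) : ℂ)^(-((s₀:ℝ):ℂ))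
      = (((2*(i:ℝ)+1) ^ (-s₀) - (2*(i:ℝ)+2) ^ (-s₀) : ℝ) : ℂ)
    rw [Complex.ofReal_sub, ← Complex.ofReal_neg,
      Complex.ofReal_cpow e1 (-s₀), Complex.ofReal_cpow e2 (-s₀)]
  have hsum_real : Summable (fun i : ℕ => (2*(i:ℝ)+1) ^ (-s₀) - (2*(i:ℝ)+2) ^ (-s₀)) := by
    refine Summable.of_nonneg_of_le (fun i => ?_) (fun i => ?_) hu
    · have : (2*(i:ℝ)+2) ^ (-s₀) ≤ (2*(i:ℝ)+1) ^ (-s₀) :=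
        Real.rpow_le_rpow_of_nonpos (by linarith [hbase i]) (by linarith) (by linarith)
      linarith
    · have : |(2*(i:ℝ)+1) ^ (-s₀) - (2*(i:ℝ)+2) ^ (-s₀)| = ‖f i ((s₀:ℝ):ℂ)‖ := by
        rw [hterm i, Complex.norm_real, Real.norm_eq_abs]
      calc (2*(i:ℝ)+1) ^ (-s₀) - (2*(i:ℝ)+2) ^ (-s₀)
          ≤ |(2*(i:ℝ)+1) ^ (-s₀) - (2*(i:ℝ)+2) ^ (-s₀)| := le_abs_self _
        _ = ‖f i ((s₀:ℝ):ℂ)‖ := this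
        _ ≤ u i := hfb i _ hs₀U
  have hTpos : 0 < T := by
    rw [hTdef]
    refine Summable.tsum_pos hsum_real (fun i => ?_) 0 ?_
    · have : (2*(i:ℝ)+2) ^ (-s₀) ≤ (2*(i:ℝ)+1) ^ (-s₀) :=
        Real.rpow_le_rpow_of_nonpos (by linarith [hbase i]) (by linarith) (by linarith)
      linarith
    · have h01 : (2*((0:ℕ):ℝ)+1 : ℝ) = 1 := by norm_num
      have h02 : (2*((0:ℕ):ℝ)+2 : ℝ) = 2 := by norm_num
      rw [h01, h02, Real.one_rpow]
      have : (2:ℝ) ^ (-s₀) < 1 :=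
        Real.rpow_lt_one_of_one_lt_of_neg one_lt_two (by linarith)
      linarith
  have hA_eval : (fun z => ∑' i : ℕ, f i z) ((s₀:ℝ):ℂ) = ((T : ℝ) : ℂ) := by
    show (∑' i : ℕ, f i ((s₀:ℝ):ℂ)) = ((T : ℝ) : ℂ)
    rw [hTdef, Complex.ofReal_tsum]
    exact tsum_congr hterm
  -- real computation of g s₀
  set c : ℝ := 1 - 2 ^ (1 - s₀) with hcdef
  have hcneg : c < 0 := by
    have : (1:ℝ) < 2 ^ (1 - s₀) :=
      (Real.one_lt_rpow_iff_of_pos (by norm_num)).mpr (Or.inl ⟨one_lt_two, by linarith⟩)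
    rw [hcdef]; linarith
  have hg_eval : g ((s₀:ℝ):ℂ) = ((c : ℝ) : ℂ) * riemannZeta ((s₀:ℝ):ℂ) := by
    rw [hgdef]
    show (1 - (2:ℂ)^((1:ℂ) - ((s₀:ℝ):ℂ))) * riemannZeta ((s₀:ℝ):ℂ) = _
    congr 1
    rw [hcdef]
    have e1 : ((1:ℂ) - ((s₀:ℝ):ℂ)) = (((1 - s₀ : ℝ)) : ℂ) := by push_cast; ring
    have e2 : ((2:ℂ)) = (((2:ℝ)) : ℂ) := by norm_num
    rw [e1, e2, ← Complex.ofReal_cpow (by norm_num : (0:ℝ) ≤ 2) (1 - s₀)]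
    push_cast
    ring
  rw [hg_eval, hA_eval] at hval
  have hc0 : ((c:ℝ):ℂ) ≠ 0 := by
    simp only [ne_eq, Complex.ofReal_eq_zero]
    linarith
  have hζval : riemannZeta ((s₀:ℝ):ℂ) = (((T / c : ℝ)) : ℂ) := by
    rw [Complex.ofReal_div]
    field_simp
    rw [mul_comm] at hval
    exact hval
  have : zetaR s₀ = T / c := by
    rw [zetaR, hζval, Complex.ofReal_re]
  rw [this]
  exact (div_neg_of_pos_of_neg hTpos hcneg).le

end ZetaStrip

lemma zetaR_nonpos {s : ℝ} (h1 : -1 < s) (h2 : s < 1) : zetaR s ≤ 0 := by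
  rcases lt_trichotomy s 0 with h | h | h
  · exact zetaR_nonpos_of_neg h1 h
  · subst h
    rw [zetaR]
    norm_num [riemannZeta_zero]
  · exact zetaR_nonpos_of_pos h h2

/-! ### dsum lemmas -/

lemma dsum_nonneg {a b : ℤ} {g : ℤ → ℝ} (hg : ∀ k, k ≠ 0 → 0 ≤ g k) : 0 ≤ dsum a b g := by
  refine Finset.sum_nonneg fun k hk => ?_
  have hk0 : k ≠ 0 := Finset.ne_of_mem_erase hk
  have : (0:ℝ) ≤ (if k = a ∨ k = b then (1:ℝ)/2 else 1) := by split <;> norm_num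
  exact mul_nonneg this (hg k hk0)

lemma dsum_mono {a b : ℤ} {g₁ g₂ : ℤ → ℝ} (hg : ∀ k, k ≠ 0 → g₁ k ≤ g₂ k) :
    dsum a b g₁ ≤ dsum a b g₂ := by
  refine Finset.sum_le_sum fun k hk => ?_
  have hk0 : k ≠ 0 := Finset.ne_of_mem_erase hk
  have : (0:ℝ) ≤ (if k = a ∨ k = b then (1:ℝ)/2 else 1) := by split <;> norm_num
  exact mul_le_mul_of_nonneg_left (hg k hk0) this

lemma dsum_le_sum {a b : ℤ} {g : ℤ → ℝ} (hg : ∀ k, k ≠ 0 → 0 ≤ g k) :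
    dsum a b g ≤ ∑ k ∈ (Finset.Icc a b).erase 0, g k := by
  refine Finset.sum_le_sum fun k hk => ?_
  have hk0 : k ≠ 0 := Finset.ne_of_mem_erase hk
  have h1 : (if k = a ∨ k = b then (1:ℝ)/2 else 1) ≤ 1 := by split <;> norm_num
  calc (if k = a ∨ k = b then (1:ℝ)/2 else 1) * g k ≤ 1 * g k :=
        mul_le_mul_of_nonneg_right h1 (hg k hk0)
    _ = g k := one_mul _

lemma dsum_sub (a b : ℤ) (g₁ g₂ : ℤ → ℝ) :
    dsum a b (fun k => g₁ k - g₂ k) = dsum a b g₁ - dsum a b g₂ := by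
  unfold dsum
  rw [← Finset.sum_sub_distrib]
  exact Finset.sum_congr rfl fun k _ => by ring

lemma dsum_const_mul (a b : ℤ) (c : ℝ) (g : ℤ → ℝ) :
    dsum a b (fun k => c * g k) = c * dsum a b g := by
  unfold dsum
  rw [Finset.mul_sum]
  exact Finset.sum_congr rfl fun k _ => by ring

/-! ### The Bernoulli-type inequality and the one-sided sum bound -/

lemma bern {α x : ℝ} (hα : 0 < α) (hx : 1 ≤ x) :
    α * (x + 1) ^ (-(1 + α)) ≤ x ^ (-α) - (x + 1) ^ (-α) := by
  have hx0 : (0:ℝ) < x := lt_of_lt_of_le one_pos hx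
  have hx1 : (0:ℝ) < x + 1 := by linarith
  set t : ℝ := 1 / (x + 1) with ht
  have ht0 : 0 < t := by positivity
  have ht1 : t < 1 := by rw [ht, div_lt_one hx1]; linarith
  have hexp1 : (1 - t) ^ α ≤ Real.exp (-t * α) := by
    calc (1 - t) ^ α ≤ (Real.exp (-t)) ^ α :=
          Real.rpow_le_rpow (by linarith) (by linarith [Real.add_one_le_exp (-t)]) hα.le
      _ = Real.exp (-t * α) := (Real.exp_mul (-t) α).symm
  have hexp2 : 1 + α * t ≤ Real.exp (α * t) := by linarith [Real.add_one_le_exp (α * t)]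
  have hprod : (1 - t) ^ α * (1 + α * t) ≤ 1 := by
    have h1 : (0:ℝ) ≤ (1 - t) ^ α := Real.rpow_nonneg (by linarith) _
    have h2 : (0:ℝ) < 1 + α * t := by nlinarith
    calc (1 - t) ^ α * (1 + α * t) ≤ Real.exp (-t * α) * Real.exp (α * t) :=
          mul_le_mul hexp1 hexp2 h2.le (Real.exp_nonneg _)
      _ = 1 := by rw [← Real.exp_add]; ring_nf; exact Real.exp_zero
  have hpow_pos : (0:ℝ) < (1 - t) ^ α := Real.rpow_pos_of_pos (by linarith) _
  have hinv : 1 + α * t ≤ (1 - t) ^ (-α) := by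
    rw [Real.rpow_neg (by linarith : (0:ℝ) ≤ 1 - t), ← one_div, le_div_iff₀ hpow_pos]
    nlinarith [hprod]
  have hxeq : x = (x + 1) * (1 - t) := by
    rw [ht]; field_simp; ring
  have hxpow : x ^ (-α) = (x + 1) ^ (-α) * (1 - t) ^ (-α) := by
    conv_lhs => rw [hxeq]
    exact Real.mul_rpow hx1.le (by linarith)
  have hbase : (0:ℝ) < (x + 1) ^ (-α) := Real.rpow_pos_of_pos hx1 _
  have hkey : (x + 1) ^ (-α) * (1 + α * t) ≤ x ^ (-α) := by
    rw [hxpow]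
    exact mul_le_mul_of_nonneg_left hinv hbase.le
  have hlast : (x + 1) ^ (-α) * t = (x + 1) ^ (-(1 + α)) := by
    rw [ht, one_div, ← Real.rpow_neg_one (x + 1), ← Real.rpow_add hx1]
    ring_nf
  nlinarith [hkey, hlast]

lemma Icc_int_insert_top (a b : ℤ) (hab : a ≤ b + 1) :
    Finset.Icc a (b + 1) = insert (b + 1) (Finset.Icc a b) := by
  ext k
  simp only [Finset.mem_Icc, Finset.mem_insert]
  omega

lemma sum_side {α : ℝ} (hα : 0 < α) :
    ∀ K : ℤ, 1 ≤ K →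
      ∑ k ∈ Finset.Icc (1:ℤ) K, ((k:ℝ)) ^ (-(1 + α)) ≤ 1 + 1/α - 1/α * (K:ℝ) ^ (-α) := by
  refine Int.le_induction ?_ ?_
  · norm_num [Real.one_rpow]
  · intro n hn hsum
    rw [Icc_int_insert_top 1 n (by omega), Finset.sum_insert (by simp)]
    have hx : (1:ℝ) ≤ (n:ℝ) := by exact_mod_cast hn
    have hb := bern hα hx
    have hcast : ((n + 1 : ℤ) : ℝ) = (n : ℝ) + 1 := by push_cast; ring
    rw [hcast]
    have hαinv : 0 < 1/α := by positivity
    have h2 := mul_le_mul_of_nonneg_left hb hαinv.le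
    have h3 : 1/α * (α * ((n:ℝ) + 1) ^ (-(1 + α))) = ((n:ℝ) + 1) ^ (-(1 + α)) := by
      field_simp
    rw [h3, mul_sub] at h2
    linarith

/-! ### Reindexing the quadrature sum -/

lemma sum_inv_Q (α h : ℝ) (hα : 0 < α) (hh : 0 < h) (K₁ K₂ : ℤ) (h1 : 1 ≤ K₁) (h2 : 1 ≤ K₂) :
    ∑ k ∈ (Finset.Icc (-K₁) K₂).erase 0, 1 / |(k:ℝ) * h| ^ (1 + α)
      = ((∑ k ∈ Finset.Icc (1:ℤ) K₁, ((k:ℝ)) ^ (-(1 + α)))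
          + ∑ k ∈ Finset.Icc (1:ℤ) K₂, ((k:ℝ)) ^ (-(1 + α))) * h ^ (-(1 + α)) := by
  have hterm : ∀ k : ℤ, 1 ≤ k → 1 / |(k:ℝ) * h| ^ (1 + α) = ((k:ℝ)) ^ (-(1 + α)) * h ^ (-(1 + α)) := by
    intro k hk
    have hk0 : (0:ℝ) < (k:ℝ) := by exact_mod_cast hk.trans_lt' zero_lt_one
    have habs : |(k:ℝ) * h| = (k:ℝ) * h := abs_of_pos (by positivity)
    rw [habs, Real.mul_rpow hk0.le hh.le, Real.rpow_neg hk0.le, Real.rpow_neg hh.le,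
      one_div, mul_inv]
  have hsplit : (Finset.Icc (-K₁) K₂).erase 0 = Finset.Icc (-K₁) (-1) ∪ Finset.Icc 1 K₂ := by
    ext k
    simp only [Finset.mem_erase, Finset.mem_Icc, Finset.mem_union]
    omega
  have hdisj : Disjoint (Finset.Icc (-K₁) (-1)) (Finset.Icc (1:ℤ) K₂) := by
    rw [Finset.disjoint_left]
    intro k hk hk'
    simp only [Finset.mem_Icc] at hk hk'
    omega
  rw [hsplit, Finset.sum_union hdisj]
  have himg : Finset.Icc (-K₁) (-1) = (Finset.Icc (1:ℤ) K₁).image (fun k => -k) := by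
    ext k
    simp only [Finset.mem_Icc, Finset.mem_image]
    constructor
    · intro hk; exact ⟨-k, by omega, by omega⟩
    · rintro ⟨m, hm, rfl⟩; omega
  have hneg : ∑ k ∈ Finset.Icc (-K₁) (-1), 1 / |(k:ℝ) * h| ^ (1 + α)
      = ∑ k ∈ Finset.Icc (1:ℤ) K₁, 1 / |(k:ℝ) * h| ^ (1 + α) := by
    rw [himg, Finset.sum_image (by intro a _ b _ hab; exact neg_inj.mp hab)]
    refine Finset.sum_congr rfl fun k _ => ?_
    push_cast
    rw [neg_mul, abs_neg]
  rw [hneg, Finset.sum_congr rfl (fun k hk => hterm k (Finset.mem_Icc.mp hk).1),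
    Finset.sum_congr rfl (fun k hk => hterm k (Finset.mem_Icc.mp hk).1), ← Finset.sum_mul,
    ← Finset.sum_mul, ← add_mul]

/-! ### One forward-Euler step preserves the bounds -/

lemma bracket_arith {α z H A S h s1 s2 a1 a2 : ℝ} (hα : 0 < α) (hH : 0 ≤ H) (hh : 0 ≤ h)
    (hA : A / α = (a1 + a2) * H) (hS : h * S ≤ (s1 + s2) * H)
    (h1 : s1 + a1 ≤ 1 + 1/α) (h2 : s2 + a2 ≤ 1 + 1/α) :
    -(2*z)*H + A/α + h*S ≤ 2*(1 + 1/α - z)*H := by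
  have key := mul_le_mul_of_nonneg_right (add_le_add h1 h2) hH
  nlinarith [key, hA, hS]

lemma Rabs_zero_of_bc {α ε h : ℝ} {J : ℤ} {V : ℤ → ℝ} {j : ℤ} (hj : ¬ |j| < J) :
    Rabs α ε h J V j = 0 := by
  unfold Rabs
  rw [if_neg hj]

lemma euler_step (α ε h Δt M : ℝ) (J : ℤ)
    (hα : 0 < α) (hα2 : α < 2) (hε : 0 < ε) (hJ : 1 ≤ J)
    (hh : h = 1 / (J : ℝ)) (hΔt : 0 < Δt)
    (hCFL : Δt / h ^ α ≤ 1 / (2 * ε * Cconst α * (1 + 1 / α - zetaR (α - 1))))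
    (hM : 0 ≤ M) (V : ℤ → ℝ)
    (hVbc : ∀ j : ℤ, J ≤ |j| → V j = 0)
    (hVlb : ∀ j : ℤ, 0 ≤ V j) (hVub : ∀ j : ℤ, V j ≤ M) :
    ∀ j : ℤ, (J ≤ |j| → V j + Δt * Rabs α ε h J V j = 0) ∧
      0 ≤ V j + Δt * Rabs α ε h J V j ∧ V j + Δt * Rabs α ε h J V j ≤ M := by
  -- global positive quantities
  have hJR : (0:ℝ) < (J:ℝ) := by exact_mod_cast lt_of_lt_of_le zero_lt_one hJ
  have hh0 : 0 < h := by rw [hh]; positivity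
  have hC : 0 < Cconst α := Cconst_pos hα hα2
  have hc : 0 < ε * Cconst α := mul_pos hε hC
  have hz : zetaR (α - 1) ≤ 0 := zetaR_nonpos (by linarith) (by linarith)
  have hH : 0 < h ^ (-α) := Real.rpow_pos_of_pos hh0 _
  intro j
  by_cases hj : |j| < J
  · -- interior point
    constructor
    · intro hcon; exact absurd hj (not_lt.mpr hcon)
    -- abbreviations
    set c : ℝ := ε * Cconst α with hcdef
    set z : ℝ := zetaR (α - 1) with hzdef
    set H : ℝ := h ^ (-α) with hHdef
    set Q : ℤ → ℝ := fun k => |(k:ℝ) * h| ^ (1 + α) with hQdef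
    set S : ℝ := dsum (-J - j) (J - j) (fun k => 1 / Q k) with hSdef
    set dV : ℝ := dsum (-J - j) (J - j) (fun k => V (j + k) / Q k) with hdVdef
    set A : ℝ := (1 + (j:ℝ) * h) ^ (-α) + (1 - (j:ℝ) * h) ^ (-α) with hAdef
    have hQpos : ∀ k : ℤ, k ≠ 0 → 0 < Q k := by
      intro k hk
      have : (k:ℝ) * h ≠ 0 := by
        apply mul_ne_zero _ hh0.ne'
        exact_mod_cast hk
      exact Real.rpow_pos_of_pos (abs_pos.mpr this) _
    -- the splitting of the double-primed sum
    have hsplitd : dsum (-J - j) (J - j) (fun k => (V (j + k) - V j) / Q k)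
        = dV - V j * S := by
      have e1 : (fun k : ℤ => (V (j + k) - V j) / Q k)
          = fun k : ℤ => V (j + k) / Q k - V j * (1 / Q k) := by
        funext k
        rw [sub_div, mul_one_div]
      rw [e1, dsum_sub, hdVdef, hSdef, ← dsum_const_mul]
    -- the master identity
    have hRid : V j + Δt * Rabs α ε h J V j
        = V j * (1 - Δt * (c * (-(2 * z) * H + A / α + h * S)))
          + Δt * (c * ((-z) * H * (V (j - 1) + V (j + 1)) + h * dV)) := by
      have : Rabs α ε h J V j =
          -(c * z * H) * (V (j - 1) - 2 * V j + V (j + 1))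
            - c / α * A * V j + c * h * (dV - V j * S) := by
        unfold Rabs
        rw [if_pos hj, ← hsplitd]
      rw [this]
      field_simp
      ring
    -- bounds on the interval endpoints
    have hjlt : -J < j ∧ j < J := abs_lt.mp hj
    have hK1 : 1 ≤ J + j := by omega
    have hK2 : 1 ≤ J - j := by omega
    have hK1R : (0:ℝ) < ((J + j : ℤ) : ℝ) := by exact_mod_cast hK1.trans_lt' zero_lt_one
    have hK2R : (0:ℝ) < ((J - j : ℤ) : ℝ) := by exact_mod_cast hK2.trans_lt' zero_lt_one
    -- rewrite A
    have h1p : 1 + (j:ℝ) * h = ((J + j : ℤ) : ℝ) * h := by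
      rw [hh]; push_cast; field_simp
    have h1m : 1 - (j:ℝ) * h = ((J - j : ℤ) : ℝ) * h := by
      rw [hh]; push_cast; field_simp
    have hArw : A = (((J + j : ℤ) : ℝ) ^ (-α) + ((J - j : ℤ) : ℝ) ^ (-α)) * H := by
      rw [hAdef, h1p, h1m, Real.mul_rpow hK1R.le hh0.le, Real.mul_rpow hK2R.le hh0.le, hHdef]
      ring
    -- bound S
    have hIccrw : Finset.Icc (-J - j) (J - j) = Finset.Icc (-(J + j)) (J - j) := by
      congr 1
      omega
    have hSle : S ≤ ((∑ k ∈ Finset.Icc (1:ℤ) (J + j), ((k:ℝ)) ^ (-(1 + α)))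
        + ∑ k ∈ Finset.Icc (1:ℤ) (J - j), ((k:ℝ)) ^ (-(1 + α))) * h ^ (-(1 + α)) := by
      rw [hSdef]
      calc dsum (-J - j) (J - j) (fun k => 1 / Q k)
          ≤ ∑ k ∈ (Finset.Icc (-J - j) (J - j)).erase 0, 1 / Q k :=
            dsum_le_sum (fun k hk => by positivity)
        _ = ∑ k ∈ (Finset.Icc (-(J + j)) (J - j)).erase 0, 1 / |(k:ℝ) * h| ^ (1 + α) := by
            rw [hIccrw]
        _ = _ := sum_inv_Q α h hα hh0 (J + j) (J - j) hK1 hK2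
    -- side sums
    have hside1 := sum_side hα (J + j) hK1
    have hside2 := sum_side hα (J - j) hK2
    -- CFL rearranged: Δt * (c * (-(2z)H + A/α + hS)) ≤ 1
    have hXpos : 0 < 2 * ε * Cconst α * (1 + 1 / α - z) := by
      have : 0 < 1 + 1 / α - z := by
        have : 0 < 1/α := by positivity
        linarith
      positivity
    have hhα : 0 < h ^ α := Real.rpow_pos_of_pos hh0 _
    have hCFL2 : Δt * (2 * ε * Cconst α * (1 + 1 / α - z)) ≤ h ^ α := by
      rw [div_le_div_iff₀ hhα hXpos] at hCFL
      linarith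
    have hHh : h ^ α * H = 1 := by
      rw [hHdef, Real.rpow_neg hh0.le]
      exact mul_inv_cancel₀ hhα.ne'
    have hhpow : h * h ^ (-(1 + α)) = H := by
      rw [hHdef]
      nth_rewrite 1 [← Real.rpow_one h]
      rw [← Real.rpow_add hh0]
      norm_num
    -- the bracket bound
    have hbr : -(2 * z) * H + A / α + h * S ≤ 2 * (1 + 1 / α - z) * H := by
      have hs' : h * S ≤ ((∑ k ∈ Finset.Icc (1:ℤ) (J + j), ((k:ℝ)) ^ (-(1 + α)))
          + ∑ k ∈ Finset.Icc (1:ℤ) (J - j), ((k:ℝ)) ^ (-(1 + α))) * H := by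
        calc h * S ≤ h * (((∑ k ∈ Finset.Icc (1:ℤ) (J + j), ((k:ℝ)) ^ (-(1 + α)))
              + ∑ k ∈ Finset.Icc (1:ℤ) (J - j), ((k:ℝ)) ^ (-(1 + α))) * h ^ (-(1 + α))) :=
              mul_le_mul_of_nonneg_left hSle hh0.le
          _ = ((∑ k ∈ Finset.Icc (1:ℤ) (J + j), ((k:ℝ)) ^ (-(1 + α)))
              + ∑ k ∈ Finset.Icc (1:ℤ) (J - j), ((k:ℝ)) ^ (-(1 + α))) * (h * h ^ (-(1 + α))) := by
              ring
          _ = _ := by rw [hhpow]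
      have hA' : A / α = (((J + j : ℤ) : ℝ) ^ (-α) / α + ((J - j : ℤ) : ℝ) ^ (-α) / α) * H := by
        rw [hArw]; ring
      have hb1 : (∑ k ∈ Finset.Icc (1:ℤ) (J + j), ((k:ℝ)) ^ (-(1 + α)))
          + ((J + j : ℤ) : ℝ) ^ (-α) / α ≤ 1 + 1 / α := by
        have hd : 1/α * ((J + j : ℤ) : ℝ) ^ (-α) = ((J + j : ℤ) : ℝ) ^ (-α) / α := by ring
        linarith [hside1]
      have hb2 : (∑ k ∈ Finset.Icc (1:ℤ) (J - j), ((k:ℝ)) ^ (-(1 + α)))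
          + ((J - j : ℤ) : ℝ) ^ (-α) / α ≤ 1 + 1 / α := by
        have hd : 1/α * ((J - j : ℤ) : ℝ) ^ (-α) = ((J - j : ℤ) : ℝ) ^ (-α) / α := by ring
        linarith [hside2]
      exact bracket_arith hα hH.le hh0.le hA' hs' hb1 hb2
    have hD : Δt * (c * (-(2 * z) * H + A / α + h * S)) ≤ 1 := by
      calc Δt * (c * (-(2 * z) * H + A / α + h * S))
          ≤ Δt * (c * (2 * (1 + 1 / α - z) * H)) := by
            apply mul_le_mul_of_nonneg_left _ hΔt.le
            exact mul_le_mul_of_nonneg_left hbr hc.le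
        _ = (Δt * (2 * ε * Cconst α * (1 + 1 / α - z))) * H := by rw [hcdef]; ring
        _ ≤ h ^ α * H := mul_le_mul_of_nonneg_right hCFL2 hH.le
        _ = 1 := hHh
    -- nonnegativity facts
    have hApos : 0 ≤ A := by
      rw [hArw]
      exact mul_nonneg (add_nonneg (Real.rpow_nonneg hK1R.le _) (Real.rpow_nonneg hK2R.le _)) hH.le
    have hSpos : 0 ≤ S := by
      rw [hSdef]
      exact dsum_nonneg (fun k hk => by positivity)
    have hdVpos : 0 ≤ dV := by
      rw [hdVdef]
      refine dsum_nonneg (fun k hk => ?_)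
      exact div_nonneg (hVlb _) (hQpos k hk).le
    have hdVle : dV ≤ M * S := by
      rw [hdVdef, hSdef, ← dsum_const_mul]
      refine dsum_mono (fun k hk => ?_)
      rw [mul_one_div]
      exact (div_le_div_iff_of_pos_right (hQpos k hk)).mpr (hVub _)
    have hone : 0 ≤ 1 - Δt * (c * (-(2 * z) * H + A / α + h * S)) := by linarith
    have hznn : 0 ≤ -z := neg_nonneg.mpr hz
    constructor
    · rw [hRid]
      have t1 : 0 ≤ V j * (1 - Δt * (c * (-(2 * z) * H + A / α + h * S))) :=
        mul_nonneg (hVlb j) hone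
      have t2 : 0 ≤ (-z) * H * (V (j - 1) + V (j + 1)) :=
        mul_nonneg (mul_nonneg hznn hH.le) (add_nonneg (hVlb _) (hVlb _))
      have t3 : 0 ≤ h * dV := mul_nonneg hh0.le hdVpos
      have t4 : 0 ≤ Δt * (c * ((-z) * H * (V (j - 1) + V (j + 1)) + h * dV)) :=
        mul_nonneg hΔt.le (mul_nonneg hc.le (add_nonneg t2 t3))
      linarith
    · rw [hRid]
      have u1 : V j * (1 - Δt * (c * (-(2 * z) * H + A / α + h * S)))
          ≤ M * (1 - Δt * (c * (-(2 * z) * H + A / α + h * S))) :=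
        mul_le_mul_of_nonneg_right (hVub j) hone
      have u2 : (-z) * H * (V (j - 1) + V (j + 1)) ≤ (-z) * H * (2 * M) :=
        mul_le_mul_of_nonneg_left (by linarith [hVub (j-1), hVub (j+1)])
          (mul_nonneg hznn hH.le)
      have u3 : h * dV ≤ h * (M * S) := mul_le_mul_of_nonneg_left hdVle hh0.le
      have u4 : Δt * (c * ((-z) * H * (V (j - 1) + V (j + 1)) + h * dV))
          ≤ Δt * (c * ((-z) * H * (2 * M) + h * (M * S))) := by
        apply mul_le_mul_of_nonneg_left _ hΔt.le
        apply mul_le_mul_of_nonneg_left _ hc.le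
        linarith
      have u5 : M * (1 - Δt * (c * (-(2 * z) * H + A / α + h * S)))
          + Δt * (c * ((-z) * H * (2 * M) + h * (M * S)))
          = M - Δt * c * M * (A / α) := by ring
      have u6 : 0 ≤ Δt * c * M * (A / α) :=
        mul_nonneg (mul_nonneg (mul_nonneg hΔt.le hc.le) hM) (div_nonneg hApos hα.le)
      linarith
  · -- boundary point
    have hbc : V j = 0 := hVbc j (not_lt.mp hj)
    rw [Rabs_zero_of_bc hj, hbc]
    norm_num [hM]

/-- Discrete maximum principle for the third-order TVD Runge-Kutta discretization of
the semi-discrete scheme with the absorbing condition. -/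
theorem stmt_2 (α ε h Δt M : ℝ) (J : ℤ)
    (hα : 0 < α) (hα2 : α < 2) (hε : 0 < ε) (hJ : 1 ≤ J)
    (hh : h = 1 / (J : ℝ)) (hΔt : 0 < Δt)
    (P : ℕ → ℤ → ℝ) (U1 U2 : ℕ → ℤ → ℝ)
    (hbc0 : ∀ j : ℤ, J ≤ |j| → P 0 j = 0)
    (hU1 : ∀ n : ℕ, ∀ j : ℤ, U1 n j = P n j + Δt * Rabs α ε h J (P n) j)
    (hU2 : ∀ n : ℕ, ∀ j : ℤ, U2 n j =
      3 / 4 * P n j + 1 / 4 * U1 n j + 1 / 4 * Δt * Rabs α ε h J (U1 n) j)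
    (hP : ∀ n : ℕ, ∀ j : ℤ, P (n + 1) j =
      1 / 3 * P n j + 2 / 3 * U2 n j + 2 / 3 * Δt * Rabs α ε h J (U2 n) j)
    (hCFL : Δt / h ^ α ≤ 1 / (2 * ε * Cconst α * (1 + 1 / α - zetaR (α - 1))))
    (hM : 0 ≤ M)
    (hinit : ∀ j : ℤ, 0 ≤ P 0 j ∧ P 0 j ≤ M) :
    ∀ n : ℕ, ∀ j : ℤ, 0 ≤ P n j ∧ P n j ≤ M := by
  have key : ∀ n : ℕ, (∀ j : ℤ, J ≤ |j| → P n j = 0) ∧ (∀ j : ℤ, 0 ≤ P n j ∧ P n j ≤ M) := by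
    intro n
    induction n with
    | zero => exact ⟨hbc0, hinit⟩
    | succ n ih =>
      obtain ⟨ibc, ib⟩ := ih
      -- step 1
      have e1 := euler_step α ε h Δt M J hα hα2 hε hJ hh hΔt hCFL hM (P n) ibc
        (fun j => (ib j).1) (fun j => (ib j).2)
      have hU1bc : ∀ j : ℤ, J ≤ |j| → U1 n j = 0 := fun j hj => by
        rw [hU1 n j]; exact (e1 j).1 hj
      have hU1lb : ∀ j : ℤ, 0 ≤ U1 n j := fun j => by
        rw [hU1 n j]; exact (e1 j).2.1
      have hU1ub : ∀ j : ℤ, U1 n j ≤ M := fun j => by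
        rw [hU1 n j]; exact (e1 j).2.2
      -- step 2
      have e2 := euler_step α ε h Δt M J hα hα2 hε hJ hh hΔt hCFL hM (U1 n) hU1bc hU1lb hU1ub
      have hU2bc : ∀ j : ℤ, J ≤ |j| → U2 n j = 0 := by
        intro j hj
        have h1 : U1 n j + Δt * Rabs α ε h J (U1 n) j = 0 := (e2 j).1 hj
        have h2 : Rabs α ε h J (U1 n) j = 0 := Rabs_zero_of_bc (not_lt.mpr hj)
        rw [hU2 n j, ibc j hj, hU1bc j hj, h2]
        ring
      have hU2rw : ∀ j : ℤ, U2 n j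
          = 3 / 4 * P n j + 1 / 4 * (U1 n j + Δt * Rabs α ε h J (U1 n) j) := fun j => by
        rw [hU2 n j]; ring
      have hU2lb : ∀ j : ℤ, 0 ≤ U2 n j := fun j => by
        rw [hU2rw j]
        have := (ib j).1
        have := (e2 j).2.1
        linarith
      have hU2ub : ∀ j : ℤ, U2 n j ≤ M := fun j => by
        rw [hU2rw j]
        have := (ib j).2
        have := (e2 j).2.2
        linarith
      -- step 3
      have e3 := euler_step α ε h Δt M J hα hα2 hε hJ hh hΔt hCFL hM (U2 n) hU2bc hU2lb hU2ub
      have hPrw : ∀ j : ℤ, P (n + 1) j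
          = 1 / 3 * P n j + 2 / 3 * (U2 n j + Δt * Rabs α ε h J (U2 n) j) := fun j => by
        rw [hP n j]; ring
      refine ⟨fun j hj => ?_, fun j => ⟨?_, ?_⟩⟩
      · rw [hPrw j, ibc j hj, (e3 j).1 hj]
        ring
      · rw [hPrw j]
        have := (ib j).1
        have := (e3 j).2.1
        linarith
      · rw [hPrw j]
        have := (ib j).2
        have := (e3 j).2.2
        linarith
  exact fun n j => (key n).2 j
end

section
/- For every integer j with |j| < J (where h = 1/J), the following estimate holds: h Σ''_{k=−J−j, k≠0}^{J−j} 1/|kh|^{1+α} + (1/α)[(1+jh)^{−α} + (1−jh)^{−α}] ≤ (2/h^α)(1 + 1/α). -/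
open scoped BigOperators

/-- Bernoulli-type inequality for negative real exponents. -/
lemma my_bern {α t : ℝ} (hα : 0 < α) (ht0 : 0 < t) (ht1 : t ≤ 1) :
    1 + α * (1 - t) ≤ t ^ (-α) := by
  rcases le_or_gt α 1 with hα1 | hα1
  · have h1 : t ^ α ≤ 1 + α * (t - 1) := by
      have := rpow_one_add_le_one_add_mul_self (s := t - 1) (by linarith) hα.le hα1
      simpa using this
    have hp : (0:ℝ) < t ^ α := Real.rpow_pos_of_pos ht0 α
    have key : (1 + α * (1 - t)) * t ^ α ≤ 1 := by nlinarith [sq_nonneg (α * (1 - t))]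
    have h2 : 1 + α * (1 - t) ≤ (t ^ α)⁻¹ := by rw [← one_div, le_div_iff₀ hp]; exact key
    rwa [← Real.rpow_neg ht0.le] at h2
  · have h1 : 1 + α * (t⁻¹ - 1) ≤ (t⁻¹) ^ α := by
      have := one_add_mul_self_le_rpow_one_add (s := t⁻¹ - 1)
        (by have := inv_pos.mpr ht0; linarith) hα1.le
      simpa using this
    have h2 : (t⁻¹ : ℝ) ^ α = t ^ (-α) := by
      rw [Real.inv_rpow ht0.le, Real.rpow_neg ht0.le]
    have h3 : 1 - t ≤ t⁻¹ - 1 := by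
      have ht' : t * t⁻¹ = 1 := mul_inv_cancel₀ ht0.ne'
      nlinarith [inv_pos.mpr ht0]
    nlinarith

/-- Mean-value-type inequality for `x ↦ x^{-α}`. -/
lemma my_key {α a b : ℝ} (hα : 0 < α) (ha : 0 < a) (hab : a < b) :
    α * (b - a) * b ^ (-(1 + α)) ≤ a ^ (-α) - b ^ (-α) := by
  have hb : 0 < b := ha.trans hab
  have hbern := my_bern hα (div_pos ha hb) ((div_le_one hb).2 hab.le)
  have e1 : b ^ (-(1 + α)) = b ^ (-α) * b⁻¹ := by
    rw [show -(1 + α) = -α + (-1) by ring, Real.rpow_add hb, Real.rpow_neg_one]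
  have e2 : (a / b) ^ (-α) * b ^ (-α) = a ^ (-α) := by
    rw [← Real.mul_rpow (by positivity) hb.le, div_mul_cancel₀ _ hb.ne']
  have hbpos : (0:ℝ) < b ^ (-α) := Real.rpow_pos_of_pos hb _
  have h4 : (1 + α * (1 - a / b)) * b ^ (-α) ≤ a ^ (-α) := by
    calc (1 + α * (1 - a / b)) * b ^ (-α) ≤ (a / b) ^ (-α) * b ^ (-α) :=
          mul_le_mul_of_nonneg_right hbern hbpos.le
      _ = a ^ (-α) := e2
  have e3 : (1 - a / b) = (b - a) / b := by field_simp
  rw [e1]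
  rw [e3] at h4
  have : α * ((b - a) / b) * b ^ (-α) = α * (b - a) * (b ^ (-α) * b⁻¹) := by
    field_simp
  linarith [this]

/-- One-sided quadrature bound, by induction on the upper limit. -/
lemma my_pos_side {α h : ℝ} (hα : 0 < α) (hh : 0 < h) :
    ∀ N : ℤ, 1 ≤ N →
      h * (∑ k ∈ Finset.Icc (1:ℤ) N, ((k:ℝ) * h) ^ (-(1 + α))) + 1 / α * ((N:ℝ) * h) ^ (-α)
        ≤ 1 / h ^ α * (1 + 1 / α) := by
  refine Int.le_induction ?_ ?_
  · simp only [Finset.Icc_self, Finset.sum_singleton, Int.cast_one, one_mul]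
    have e1 : h * h ^ (-(1 + α)) = h ^ (-α) := by
      rw [show -(1 + α) = -α + (-1) by ring, Real.rpow_add hh, Real.rpow_neg_one]
      field_simp
    have e2 : 1 / h ^ α = h ^ (-α) := by
      rw [Real.rpow_neg hh.le, one_div]
    rw [e1, e2]; ring_nf; rfl
  · intro N hN ih
    have hins : Finset.Icc (1:ℤ) (N + 1) = insert (N + 1) (Finset.Icc (1:ℤ) N) := by
      ext k; simp only [Finset.mem_Icc, Finset.mem_insert]; omega
    have hnot : (N + 1) ∉ Finset.Icc (1:ℤ) N := by simp
    rw [hins, Finset.sum_insert hnot]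
    have hN' : (1:ℝ) ≤ (N:ℝ) := by exact_mod_cast hN
    have ha : (0:ℝ) < (N:ℝ) * h := by positivity
    have hab : (N:ℝ) * h < ((N:ℝ) + 1) * h := by nlinarith
    have hk := my_key hα ha hab
    have hba : (((N:ℝ) + 1) * h) - (N:ℝ) * h = h := by ring
    rw [hba] at hk
    have hstep : h * (((N:ℝ) + 1) * h) ^ (-(1 + α)) + 1 / α * (((N:ℝ) + 1) * h) ^ (-α)
        ≤ 1 / α * ((N:ℝ) * h) ^ (-α) := by
      have h1 : 1 / α * (α * h * (((N:ℝ) + 1) * h) ^ (-(1 + α)))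
          ≤ 1 / α * (((N:ℝ) * h) ^ (-α) - (((N:ℝ) + 1) * h) ^ (-α)) :=
        mul_le_mul_of_nonneg_left hk (by positivity)
      have e : 1 / α * (α * h * (((N:ℝ) + 1) * h) ^ (-(1 + α)))
          = h * (((N:ℝ) + 1) * h) ^ (-(1 + α)) := by field_simp
      rw [e] at h1; linarith
    push_cast
    rw [mul_add]
    push_cast at ih
    linarith

/-- The key quadrature estimate for the absorbing scheme. -/
theorem stmt_5 (α : ℝ) (J : ℤ) (h : ℝ)
    (hα : 0 < α) (hα2 : α < 2) (hJ : 1 ≤ J) (hh : h = 1 / (J : ℝ)) :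
    ∀ j : ℤ, |j| < J →
      h * dsum (-J - j) (J - j) (fun k => 1 / |(k : ℝ) * h| ^ (1 + α))
          + 1 / α * ((1 + (j : ℝ) * h) ^ (-α) + (1 - (j : ℝ) * h) ^ (-α))
        ≤ 2 / h ^ α * (1 + 1 / α) := by
  intro j hj
  rw [abs_lt] at hj
  set g : ℤ → ℝ := fun k => 1 / |(k : ℝ) * h| ^ (1 + α) with hg
  have hJpos : (0:ℝ) < (J:ℝ) := by exact_mod_cast hJ
  have hhpos : 0 < h := by rw [hh]; positivity
  have hJh : (J:ℝ) * h = 1 := by rw [hh]; field_simp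
  have hgnn : ∀ k, 0 ≤ g k := by intro k; simp only [hg]; positivity
  -- step A: drop weights
  have hA : dsum (-J - j) (J - j) g ≤ ∑ k ∈ (Finset.Icc (-J-j) (J-j)).erase 0, g k := by
    apply Finset.sum_le_sum
    intro k _
    split_ifs
    · linarith [hgnn k]
    · rw [one_mul]
  -- step B: split the sum
  have hB : (Finset.Icc (-J-j) (J-j)).erase 0
      = Finset.Icc (-J-j) (-1) ∪ Finset.Icc 1 (J-j) := by
    ext k
    simp only [Finset.mem_erase, Finset.mem_Icc, Finset.mem_union]
    omega
  have hdisj : Disjoint (Finset.Icc (-J-j) (-1)) (Finset.Icc (1:ℤ) (J-j)) := by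
    rw [Finset.disjoint_left]
    intro k hk hk'
    simp only [Finset.mem_Icc] at hk hk'
    omega
  -- step C: reflect the negative part
  have hC : ∑ k ∈ Finset.Icc (-J-j) (-1), g k = ∑ k ∈ Finset.Icc (1:ℤ) (J+j), g k := by
    apply Finset.sum_nbij' (i := fun k => -k) (j := fun k => -k)
    · intro k hk; simp only [Finset.mem_Icc] at *; omega
    · intro k hk; simp only [Finset.mem_Icc] at *; omega
    · intro k _; ring
    · intro k _; ring
    · intro k _
      simp only [hg]
      push_cast
      rw [neg_mul, abs_neg]
  -- step D: rewrite positive-part sums as rpow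
  have hD : ∀ M : ℤ, 1 ≤ M →
      ∑ k ∈ Finset.Icc (1:ℤ) M, g k = ∑ k ∈ Finset.Icc (1:ℤ) M, ((k:ℝ) * h) ^ (-(1+α)) := by
    intro M hM
    apply Finset.sum_congr rfl
    intro k hk
    simp only [Finset.mem_Icc] at hk
    have hk1 : (1:ℝ) ≤ (k:ℝ) := by exact_mod_cast hk.1
    have hkh : (0:ℝ) < (k:ℝ) * h := by positivity
    simp only [hg]
    rw [abs_of_pos hkh, Real.rpow_neg hkh.le, one_div]
  -- the two one-sided bounds
  have hM1 : (1:ℤ) ≤ J + j := by omega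
  have hM2 : (1:ℤ) ≤ J - j := by omega
  have hS1 := my_pos_side hα hhpos (J + j) hM1
  have hS2 := my_pos_side hα hhpos (J - j) hM2
  have e1 : ((J + j : ℤ) : ℝ) * h = 1 + (j:ℝ) * h := by push_cast; rw [add_mul, hJh]
  have e2 : ((J - j : ℤ) : ℝ) * h = 1 - (j:ℝ) * h := by push_cast; rw [sub_mul, hJh]
  rw [e1] at hS1
  rw [e2] at hS2
  -- combine
  have hsplit : ∑ k ∈ (Finset.Icc (-J-j) (J-j)).erase 0, g k
      = (∑ k ∈ Finset.Icc (1:ℤ) (J+j), ((k:ℝ) * h) ^ (-(1+α)))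
        + (∑ k ∈ Finset.Icc (1:ℤ) (J-j), ((k:ℝ) * h) ^ (-(1+α))) := by
    rw [hB, Finset.sum_union hdisj, hC, hD _ hM1, hD _ hM2]
  have hAB : h * dsum (-J - j) (J - j) g
      ≤ h * ((∑ k ∈ Finset.Icc (1:ℤ) (J+j), ((k:ℝ) * h) ^ (-(1+α)))
        + (∑ k ∈ Finset.Icc (1:ℤ) (J-j), ((k:ℝ) * h) ^ (-(1+α)))) := by
    rw [← hsplit]
    exact mul_le_mul_of_nonneg_left hA hhpos.le
  rw [mul_add] at hAB
  have hrhs : 2 / h ^ α * (1 + 1 / α) = 2 * (1 / h ^ α * (1 + 1 / α)) := by ring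
  rw [hrhs]
  linarith
end

section
/- If the CFL-type condition Δt/h^α ≤ 1/(2 ε C_α (1 + 1/α − ζ(α−1))) holds, then for every integer j with |j| < J, the diagonal coefficient of the explicit Euler natural scheme is nonnegative: 1 + 2Δt ε C_α ζ(α−1) h^{−α} − Δt ε C_α h Σ''_{k=−J−j, k≠0}^{J−j} 1/|kh|^{1+α} ≥ 0. -/
open scoped BigOperators

lemma Cconst_pos_s8 {α : ℝ} (hα : 0 < α) (hα2 : α < 2) : 0 < Cconst α := by
  apply div_pos
  · exact mul_pos hα (Real.Gamma_pos_of_pos (by linarith))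
  · exact mul_pos (mul_pos (Real.rpow_pos_of_pos (by norm_num) _)
      (Real.sqrt_pos.mpr Real.pi_pos)) (Real.Gamma_pos_of_pos (by linarith))

lemma key_ineq {α : ℝ} (hα : 0 < α) {x : ℝ} (hx : 1 ≤ x) :
    α * (x + 1) ^ (-(1 + α)) ≤ x ^ (-α) - (x + 1) ^ (-α) := by
  have hx0 : (0:ℝ) < x := by linarith
  have hy : (0:ℝ) < x + 1 := by linarith
  have hv : (0:ℝ) < x / (x + 1) := by positivity
  have h1 : Real.log (x / (x + 1)) ≤ x / (x + 1) - 1 := Real.log_le_sub_one_of_pos hv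
  have h2 : 1 + (-α * Real.log (x / (x + 1))) ≤ (x / (x + 1)) ^ (-α) := by
    rw [Real.rpow_def_of_pos hv, mul_comm (Real.log (x / (x + 1))) (-α)]
    have := Real.add_one_le_exp (-α * Real.log (x / (x + 1)))
    linarith
  have hfrac : 1 - x / (x + 1) = 1 / (x + 1) := by field_simp; ring
  have h1' := mul_le_mul_of_nonneg_left h1 hα.le
  have h3 : 1 + α * (1 / (x + 1)) ≤ (x / (x + 1)) ^ (-α) := by nlinarith
  have h4 : (x / (x + 1)) ^ (-α) = x ^ (-α) / (x + 1) ^ (-α) :=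
    Real.div_rpow hx0.le hy.le _
  have hA : (0:ℝ) < (x + 1) ^ (-α) := Real.rpow_pos_of_pos hy _
  have h5 : (x + 1) ^ (-(1 + α)) = (x + 1) ^ (-α) * (1 / (x + 1)) := by
    rw [show -(1 + α) = -α + (-1) by ring, Real.rpow_add hy, Real.rpow_neg_one, one_div]
  have h6 := mul_le_mul_of_nonneg_left h3 hA.le
  rw [h4, mul_div_cancel₀ _ (ne_of_gt hA)] at h6
  rw [h5]
  nlinarith

lemma Icc_int_succ {a b : ℤ} (h : a ≤ b + 1) :
    Finset.Icc a (b + 1) = insert (b + 1) (Finset.Icc a b) := by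
  ext k
  simp only [Finset.mem_Icc, Finset.mem_insert]
  omega

lemma sum_Icc_rpow_le {α : ℝ} (hα : 0 < α) (N : ℤ) :
    ∑ k ∈ Finset.Icc (1:ℤ) N, ((k:ℝ)) ^ (-(1 + α)) ≤ 1 + 1 / α := by
  rcases lt_or_ge N 1 with hN | hN
  · rw [Finset.Icc_eq_empty (by omega)]
    simp
    positivity
  · have main : ∑ k ∈ Finset.Icc (1:ℤ) N, ((k:ℝ)) ^ (-(1 + α)) ≤
        1 + 1 / α - (1 / α) * (N:ℝ) ^ (-α) := by
      refine Int.le_induction (motive := fun N _ => ∑ k ∈ Finset.Icc (1:ℤ) N,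
          ((k:ℝ)) ^ (-(1 + α)) ≤ 1 + 1 / α - (1 / α) * (N:ℝ) ^ (-α)) ?_ ?_ N hN
      · simp [Real.one_rpow]
      · intro n hn ih
        rw [Icc_int_succ (by omega), Finset.sum_insert (by simp)]
        have hx : (1:ℝ) ≤ (n:ℝ) := by exact_mod_cast hn
        have hk := key_ineq hα hx
        have hcast : ((n + 1 : ℤ) : ℝ) = (n:ℝ) + 1 := by push_cast; ring
        rw [hcast]
        have h7 : ((n:ℝ) + 1) ^ (-(1 + α)) ≤
            ((n:ℝ) ^ (-α) - ((n:ℝ) + 1) ^ (-α)) / α := by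
          rw [le_div_iff₀ hα]; linarith
        have h8 : (1 / α) * ((n:ℝ) ^ (-α) - ((n:ℝ) + 1) ^ (-α))
            = ((n:ℝ) ^ (-α) - ((n:ℝ) + 1) ^ (-α)) / α := by ring
        nlinarith [ih]
    have hNpos : (0:ℝ) < (N:ℝ) := by exact_mod_cast (by omega : (0:ℤ) < N)
    have : 0 < (N:ℝ) ^ (-α) := Real.rpow_pos_of_pos hNpos _
    have h1α : 0 < 1 / α := by positivity
    nlinarith

lemma sum_subset_rpow_le {α : ℝ} (hα : 0 < α) {N : ℤ} {t : Finset ℤ}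
    (ht : t ⊆ Finset.Icc 1 N) :
    ∑ k ∈ t, ((k:ℝ)) ^ (-(1 + α)) ≤ 1 + 1 / α := by
  refine le_trans (Finset.sum_le_sum_of_subset_of_nonneg ht ?_) (sum_Icc_rpow_le hα N)
  intro k hk _
  have : (1:ℤ) ≤ k := (Finset.mem_Icc.mp hk).1
  have : (0:ℝ) ≤ (k:ℝ) := by exact_mod_cast (by omega : (0:ℤ) ≤ k)
  exact Real.rpow_nonneg this _

lemma sum_abs_rpow_le {α : ℝ} (hα : 0 < α) (a b : ℤ) :
    ∑ k ∈ (Finset.Icc a b).erase 0, |((k:ℝ))| ^ (-(1 + α)) ≤ 2 * (1 + 1 / α) := by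
  classical
  set s := (Finset.Icc a b).erase 0 with hs
  rw [← Finset.sum_filter_add_sum_filter_not s (fun k => 0 < k)]
  have hpos : ∑ k ∈ s.filter (fun k => 0 < k), |((k:ℝ))| ^ (-(1 + α)) ≤ 1 + 1 / α := by
    have heq : ∑ k ∈ s.filter (fun k => 0 < k), |((k:ℝ))| ^ (-(1 + α))
        = ∑ k ∈ s.filter (fun k => 0 < k), ((k:ℝ)) ^ (-(1 + α)) := by
      refine Finset.sum_congr rfl fun k hk => ?_
      have hk' : 0 < k := (Finset.mem_filter.mp hk).2
      rw [abs_of_pos (by exact_mod_cast hk')]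
    rw [heq]
    refine sum_subset_rpow_le hα (N := b) ?_
    intro k hk
    simp only [Finset.mem_filter, hs, Finset.mem_erase, Finset.mem_Icc] at hk
    exact Finset.mem_Icc.mpr ⟨by omega, by omega⟩
  have hneg : ∑ k ∈ s.filter (fun k => ¬ 0 < k), |((k:ℝ))| ^ (-(1 + α)) ≤ 1 + 1 / α := by
    have hinj : ∀ x ∈ s.filter (fun k => ¬ 0 < k), ∀ y ∈ s.filter (fun k => ¬ 0 < k),
        -x = -y → x = y := fun x _ y _ hxy => by omega
    have heq : ∑ m ∈ (s.filter (fun k => ¬ 0 < k)).image (fun k => -k),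
        ((m:ℝ)) ^ (-(1 + α))
        = ∑ k ∈ s.filter (fun k => ¬ 0 < k), |((k:ℝ))| ^ (-(1 + α)) := by
      rw [Finset.sum_image hinj]
      refine Finset.sum_congr rfl fun k hk => ?_
      simp only [Finset.mem_filter, hs, Finset.mem_erase] at hk
      have hk' : k < 0 := by omega
      have : ((-k : ℤ) : ℝ) = |((k:ℝ))| := by
        rw [abs_of_neg (by exact_mod_cast hk')]; push_cast; ring
      rw [this]
    rw [← heq]
    refine sum_subset_rpow_le hα (N := -a) ?_
    intro m hm
    obtain ⟨k, hk, rfl⟩ := Finset.mem_image.mp hm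
    simp only [Finset.mem_filter, hs, Finset.mem_erase, Finset.mem_Icc] at hk
    exact Finset.mem_Icc.mpr ⟨by omega, by omega⟩
  linarith

/-- Nonnegativity of the diagonal coefficient of the explicit Euler natural scheme
under the CFL-type condition. -/
theorem stmt_8 (α ε h Δt : ℝ) (J : ℤ)
    (hα : 0 < α) (hα2 : α < 2) (hε : 0 < ε) (hJ : 1 ≤ J)
    (hh : 0 < h) (hΔt : 0 < Δt)
    (hCFL : Δt / h ^ α ≤ 1 / (2 * ε * Cconst α * (1 + 1 / α - zetaR (α - 1)))) :
    ∀ j : ℤ, |j| < J →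
      0 ≤ 1 + 2 * Δt * ε * Cconst α * zetaR (α - 1) * h ^ (-α)
          - Δt * ε * Cconst α * h *
              dsum (-J - j) (J - j) (fun k => 1 / |(k : ℝ) * h| ^ (1 + α)) := by
  intro j hj
  set C := Cconst α with hC
  set Z := zetaR (α - 1) with hZ
  have hCpos : 0 < C := Cconst_pos_s8 hα hα2
  have hH : (0:ℝ) < h ^ α := Real.rpow_pos_of_pos hh _
  have hHi : (0:ℝ) < h ^ (-α) := Real.rpow_pos_of_pos hh _
  have hH1 : (0:ℝ) < h ^ (-(1 + α)) := Real.rpow_pos_of_pos hh _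
  have hlhs : 0 < Δt / h ^ α := div_pos hΔt hH
  have hD : 0 < 1 + 1 / α - Z := by
    by_contra hD'
    push_neg at hD'
    have hden : 2 * ε * C * (1 + 1 / α - Z) ≤ 0 :=
      mul_nonpos_iff.mpr (Or.inl ⟨by positivity, hD'⟩)
    have : 1 / (2 * ε * C * (1 + 1 / α - Z)) ≤ 0 := by
      rcases lt_or_eq_of_le hden with h' | h'
      · exact le_of_lt (by exact one_div_neg.mpr h')
      · rw [h']; simp
    linarith
  have hdenpos : 0 < 2 * ε * C * (1 + 1 / α - Z) := by positivity
  have hCFL' : Δt * (2 * ε * C * (1 + 1 / α - Z)) ≤ 1 * h ^ α :=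
    (div_le_div_iff₀ hH hdenpos).mp hCFL
  -- bound the dsum
  set a := -J - j with ha
  set b := J - j with hb
  set S := dsum a b (fun k => 1 / |(k : ℝ) * h| ^ (1 + α)) with hS
  have hg : ∀ k : ℤ, k ≠ 0 →
      (1 : ℝ) / |(k : ℝ) * h| ^ (1 + α) = h ^ (-(1 + α)) * |((k:ℝ))| ^ (-(1 + α)) := by
    intro k hk
    rw [abs_mul, abs_of_pos hh, Real.mul_rpow (abs_nonneg _) hh.le, one_div, mul_inv,
      ← Real.rpow_neg (abs_nonneg _), ← Real.rpow_neg hh.le]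
    ring
  have hSle : S ≤ h ^ (-(1 + α)) * (2 * (1 + 1 / α)) := by
    have step1 : S ≤ ∑ k ∈ (Finset.Icc a b).erase 0,
        h ^ (-(1 + α)) * |((k:ℝ))| ^ (-(1 + α)) := by
      rw [hS, dsum]
      refine Finset.sum_le_sum fun k hk => ?_
      have hk0 : k ≠ 0 := Finset.ne_of_mem_erase hk
      rw [← hg k hk0]
      have hgnn : (0:ℝ) ≤ 1 / |(k : ℝ) * h| ^ (1 + α) := by positivity
      have hw : (if k = a ∨ k = b then (1:ℝ)/2 else 1) ≤ 1 := by
        split_ifs <;> norm_num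
      nlinarith
    rw [← Finset.mul_sum] at step1
    have step2 := sum_abs_rpow_le hα a b
    nlinarith
  -- combine
  have hmul1 : h * h ^ (-(1 + α)) = h ^ (-α) := by
    rw [show (-α) = 1 + (-(1 + α)) by ring, Real.rpow_add hh, Real.rpow_one]
  have hmul2 : h ^ α * h ^ (-α) = 1 := by
    rw [← Real.rpow_add hh]; simp
  have hP : 0 < Δt * ε * C := by positivity
  have key1 : Δt * ε * C * h * S ≤ Δt * ε * C * (2 * (1 + 1 / α)) * h ^ (-α) := by
    have := mul_le_mul_of_nonneg_left hSle (by positivity : (0:ℝ) ≤ Δt * ε * C * h)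
    calc Δt * ε * C * h * S ≤ Δt * ε * C * h * (h ^ (-(1 + α)) * (2 * (1 + 1 / α))) := this
      _ = Δt * ε * C * (2 * (1 + 1 / α)) * (h * h ^ (-(1 + α))) := by ring
      _ = Δt * ε * C * (2 * (1 + 1 / α)) * h ^ (-α) := by rw [hmul1]
  have key2 : Δt * (2 * ε * C * (1 + 1 / α - Z)) * h ^ (-α) ≤ 1 := by
    calc Δt * (2 * ε * C * (1 + 1 / α - Z)) * h ^ (-α)
        ≤ 1 * h ^ α * h ^ (-α) := mul_le_mul_of_nonneg_right hCFL' hHi.le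
      _ = h ^ α * h ^ (-α) := by ring
      _ = 1 := hmul2
  nlinarith [mul_pos hP hHi]
end

section
/- For every real number s with −1 < s < 1, the value ζ(s) of the Riemann zeta function is a negative real number; that is, ζ(s) has zero imaginary part and Re ζ(s) < 0. -/
open Complex

/-! Auxiliary development: the Dirichlet eta function as a `ZMod 2` L-function,
used to show `ζ(s) < 0` for `0 < s < 1`; the functional equation handles `-1 < s < 0`. -/

noncomputable def phi2 : ZMod 2 → ℂ := fun j => if j = 0 then -1 else 1

lemma phi2_sum : ∑ j, phi2 j = 0 := by
  have : (Finset.univ : Finset (ZMod 2)) = {0, 1} := by decide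
  rw [this, Finset.sum_insert (by decide), Finset.sum_singleton]
  norm_num [phi2]

lemma phi2_odd (k : ℕ) : phi2 ((2 * k + 1 : ℕ) : ZMod 2) = 1 := by
  have h : (2 * k + 1) % 2 = 1 := by omega
  rw [← ZMod.natCast_mod, h]; rfl

lemma phi2_even {k : ℕ} (h : 2 ∣ k) : phi2 ((k : ℕ) : ZMod 2) = -1 := by
  have h2 : k % 2 = 0 := Nat.mod_eq_zero_of_dvd h
  rw [← ZMod.natCast_mod, h2]; rfl

lemma term_two_mul {s : ℂ} (k : ℕ) :
    LSeries.term 1 s (2 * k) = (2 : ℂ) ^ (-s) * LSeries.term 1 s k := by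
  rcases Nat.eq_zero_or_pos k with rfl | hk
  · simp
  · rw [LSeries.term_of_ne_zero (by omega), LSeries.term_of_ne_zero hk.ne']
    have h2 : ((2 * k : ℕ) : ℂ) = ((2 : ℝ) : ℂ) * ((k : ℝ) : ℂ) := by push_cast; ring
    rw [h2, mul_cpow_ofReal_nonneg (by norm_num) (Nat.cast_nonneg k), cpow_neg, Pi.one_apply]
    have hne : ((2 : ℝ) : ℂ) ^ s ≠ 0 := by
      simp [cpow_eq_zero_iff]
    push_cast
    field_simp
    rfl

lemma hasSum_term_one {s : ℂ} (hs : 1 < s.re) :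
    HasSum (LSeries.term 1 s) (riemannZeta s) := by
  have h := (LSeriesSummable_one_iff.mpr hs).hasSum
  rwa [show ∑' n, LSeries.term 1 s n = LSeries 1 s from rfl, LSeries_one_eq_riemannZeta hs] at h

lemma hasSum_even_part {s : ℂ} (hs : 1 < s.re) :
    HasSum (fun n : ℕ => if 2 ∣ n then LSeries.term 1 s n else 0)
      ((2 : ℂ) ^ (-s) * riemannZeta s) := by
  have hinj : Function.Injective (fun k : ℕ => 2 * k) := fun a b h => by simpa using h
  rw [← Function.Injective.hasSum_iff hinj ?_]
  · have : ((fun n : ℕ => if 2 ∣ n then LSeries.term 1 s n else 0) ∘ (fun k : ℕ => 2 * k))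
        = fun k => (2:ℂ)^(-s) * LSeries.term 1 s k := by
      funext k
      simp only [Function.comp_apply, if_pos (Dvd.intro k rfl), term_two_mul]
    rw [this]
    exact (hasSum_term_one hs).mul_left _
  · intro n hn
    have : ¬ 2 ∣ n := by
      rintro ⟨m, rfl⟩
      exact hn ⟨m, rfl⟩
    simp [this]

lemma hasSum_phi2 {s : ℂ} (hs : 1 < s.re) :
    HasSum (LSeries.term (fun n => phi2 n) s)
      ((1 - 2 ^ ((1 : ℂ) - s)) * riemannZeta s) := by
  have key : LSeries.term (fun n => phi2 n) s
      = fun n => LSeries.term 1 s n - 2 * (if 2 ∣ n then LSeries.term 1 s n else 0) := by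
    funext n
    rcases Nat.eq_zero_or_pos n with rfl | hn
    · simp
    · rw [LSeries.term_of_ne_zero hn.ne', LSeries.term_of_ne_zero hn.ne', Pi.one_apply]
      by_cases h2 : 2 ∣ n
      · rw [if_pos h2, phi2_even h2]; ring
      · obtain ⟨k, rfl⟩ : ∃ k, n = 2 * k + 1 := ⟨n / 2, by omega⟩
        rw [if_neg h2, phi2_odd]; ring
  rw [key]
  have h := (hasSum_term_one hs).sub ((hasSum_even_part hs).mul_left 2)
  convert h using 1
  · rfl
  have h21 : (2 : ℂ) ^ ((1:ℂ) - s) = 2 * (2:ℂ) ^ (-s) := by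
    rw [show (1:ℂ) - s = 1 + (-s) by ring, cpow_add _ _ two_ne_zero, cpow_one]
  rw [h21]; ring

lemma etaFactor {s : ℂ} (hs : s ≠ 1) :
    ZMod.LFunction phi2 s = (1 - 2 ^ ((1 : ℂ) - s)) * riemannZeta s := by
  have hpc : IsPreconnected ({1}ᶜ : Set ℂ) :=
    (isConnected_compl_singleton_of_one_lt_rank (rank_real_complex ▸ Nat.one_lt_ofNat) _)
      |>.isPreconnected
  have hne : (2 : ℂ) ∈ ({1}ᶜ : Set ℂ) := by norm_num
  refine AnalyticOnNhd.eqOn_of_preconnected_of_eventuallyEq (𝕜 := ℂ)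
    (g := fun s => (1 - 2 ^ ((1 : ℂ) - s)) * riemannZeta s) ?_ ?_ hpc hne ?_ hs
  · exact (ZMod.differentiable_LFunction_of_sum_zero phi2_sum).differentiableOn.analyticOnNhd
      isOpen_compl_singleton
  · refine DifferentiableOn.analyticOnNhd (fun z hz => ?_) isOpen_compl_singleton
    refine (((differentiable_const _).sub ?_).differentiableAt.mul
      (differentiableAt_riemannZeta hz)).differentiableWithinAt
    exact ((differentiable_const _).sub differentiable_id).const_cpow (.inl two_ne_zero)
  · refine Filter.eventually_of_mem ?_ (fun t (ht : 1 < t.re) => ?_)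
    · exact (continuous_re.isOpen_preimage _ isOpen_Ioi).mem_nhds (by norm_num : 1 < (2:ℂ).re)
    · rw [ZMod.LFunction_eq_LSeries _ ht]
      exact (hasSum_phi2 ht).tsum_eq

lemma pair_bound {a : ℝ} (ha : 0 ≤ a) {s : ℂ} (hs : a < s.re) (hs10 : ‖s‖ ≤ 10)
    {m : ℝ} (hm : 1 ≤ m) :
    ‖((m : ℂ)) ^ (-s) - (((m + 1 : ℝ)) : ℂ) ^ (-s)‖ ≤ (m : ℝ) ^ (-a) * (m⁻¹ * 10) := by
  have hm0 : (0 : ℝ) < m := by linarith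
  set ψ : ℝ → ℂ := fun t => Complex.exp (Real.log t * (-s)) with hψ
  have hpsi_eq : ∀ t : ℝ, 0 < t → ((t : ℂ)) ^ (-s) = ψ t := by
    intro t ht
    rw [cpow_def_of_ne_zero (by exact_mod_cast ht.ne'), ← Complex.ofReal_log ht.le]
  set C : ℝ := m ^ (-a) * (m⁻¹ * 10) with hC
  have key : ∀ t ∈ Set.Icc m (m + 1),
      HasDerivWithinAt ψ (Complex.exp (Real.log t * (-s)) * ((t⁻¹ : ℝ) * (-s)))
        (Set.Icc m (m + 1)) t := by
    intro t ht
    have ht0 : (0 : ℝ) < t := hm0.trans_le ht.1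
    have h2 : HasDerivAt (fun t : ℝ => ((Real.log t : ℝ) : ℂ)) ((t⁻¹ : ℝ) : ℂ) t :=
      (Real.hasDerivAt_log ht0.ne').ofReal_comp
    exact ((h2.mul_const (-s)).cexp).hasDerivWithinAt
  have hbound : ∀ t ∈ Set.Icc m (m + 1),
      ‖Complex.exp (Real.log t * (-s)) * ((t⁻¹ : ℝ) * (-s))‖ ≤ C := by
    intro t ht
    have ht0 : (0 : ℝ) < t := hm0.trans_le ht.1
    rw [norm_mul, Complex.norm_exp]
    have hre : ((Real.log t : ℂ) * (-s)).re = Real.log t * (-s.re) := by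
      rw [Complex.re_ofReal_mul, Complex.neg_re]
    rw [hre]
    have hlog : 0 ≤ Real.log t := Real.log_nonneg (by linarith [ht.1])
    have h1 : Real.exp (Real.log t * (-s.re)) ≤ t ^ (-a) := by
      rw [Real.rpow_def_of_pos ht0]
      apply Real.exp_le_exp.mpr
      have := mul_le_mul_of_nonneg_left (neg_le_neg hs.le) hlog
      simpa using this
    have h2 : t ^ (-a) ≤ m ^ (-a) :=
      Real.rpow_le_rpow_of_nonpos hm0 ht.1 (neg_nonpos.mpr ha)
    have h3 : ‖((t⁻¹ : ℝ) : ℂ) * (-s)‖ ≤ m⁻¹ * 10 := by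
      rw [norm_mul, norm_neg, Complex.norm_real, Real.norm_eq_abs,
        abs_of_pos (inv_pos.mpr ht0)]
      have hti : t⁻¹ ≤ m⁻¹ := inv_anti₀ hm0 ht.1
      exact mul_le_mul hti hs10 (norm_nonneg s) (inv_nonneg.mpr hm0.le)
    exact mul_le_mul (h1.trans h2) h3 (norm_nonneg _) (Real.rpow_nonneg hm0.le _)
  have hfin := Convex.norm_image_sub_le_of_norm_hasDerivWithin_le key hbound
    (convex_Icc _ _) (Set.left_mem_Icc.mpr (by linarith)) (Set.right_mem_Icc.mpr (by linarith))
  rw [hpsi_eq m hm0, hpsi_eq (m + 1) (by linarith), norm_sub_rev]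
  calc ‖ψ (m + 1) - ψ m‖ ≤ C * ‖(m + 1) - m‖ := hfin
    _ = C := by simp

noncomputable def gpair (k : ℕ) (s : ℂ) : ℂ :=
  (((2 * k + 1 : ℝ)) : ℂ) ^ (-s) - (((2 * k + 1 : ℝ) + 1 : ℝ) : ℂ) ^ (-s)

lemma gpair_eq_terms (k : ℕ) (s : ℂ) :
    gpair k s = LSeries.term (fun n => phi2 n) s (2 * k + 1)
      + LSeries.term (fun n => phi2 n) s (2 * k + 2) := by
  rw [LSeries.term_of_ne_zero (by omega), LSeries.term_of_ne_zero (by omega)]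
  rw [phi2_odd, show ((2 * k + 2 : ℕ) : ZMod 2) = ((2 * (k + 1) : ℕ) : ZMod 2) by norm_cast,
    phi2_even ⟨k + 1, rfl⟩]
  rw [gpair, cpow_neg, cpow_neg]
  push_cast
  ring

lemma gpair_hasSum {s : ℂ} (hs : 1 < s.re) :
    HasSum (fun k => gpair k s) ((1 - 2 ^ ((1 : ℂ) - s)) * riemannZeta s) := by
  have H := hasSum_phi2 hs
  set f := LSeries.term (fun n => phi2 n) s with hf
  have Se : Summable fun k => f (2 * k) :=
    H.summable.comp_injective fun a b h => by omega
  have So : Summable fun k => f (2 * k + 1) :=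
    H.summable.comp_injective fun a b h => by omega
  have huniq : (∑' k, f (2 * k)) + (∑' k, f (2 * k + 1))
      = (1 - 2 ^ ((1 : ℂ) - s)) * riemannZeta s :=
    (Se.hasSum.even_add_odd So.hasSum).unique H
  have He' : HasSum (fun k => f (2 * k + 2)) (∑' k, f (2 * k)) := by
    have h0 : (fun k => f (2 * k + 2)) = fun k => (fun n => f (2 * n)) (k + 1) := by
      funext k; congr 1
    rw [h0]
    refine (hasSum_nat_add_iff (f := fun n => f (2 * n))
      (g := ∑' k, f (2 * k)) 1).mpr ?_
    have hz : f 0 = 0 := rfl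
    simpa [hz] using Se.hasSum
  have Hg : HasSum (fun k => gpair k s) ((∑' k, f (2 * k + 1)) + (∑' k, f (2 * k))) := by
    have hfun : (fun k => gpair k s) = fun k => f (2 * k + 1) + f (2 * k + 2) :=
      funext fun k => gpair_eq_terms k s
    rw [hfun]
    exact So.hasSum.add He'
  rwa [add_comm, huniq] at Hg

lemma eta_pos {x : ℝ} (h0 : 0 < x) (h1 : x < 1) :
    ∃ r : ℝ, 0 < r ∧ ZMod.LFunction phi2 (x : ℂ) = (r : ℂ) := by
  set a : ℝ := x / 2 with ha
  have ha0 : 0 < a := by positivity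
  have ha1 : a < 1 := by simp only [ha]; linarith
  set T : Set ℂ := {s | a < s.re} ∩ Metric.ball 0 10 with hT
  have hTopen : IsOpen T :=
    ((continuous_re.isOpen_preimage _ isOpen_Ioi).inter Metric.isOpen_ball)
  have hTconv : Convex ℝ T := (convex_halfSpace_re_gt a).inter (convex_ball 0 10)
  have hxT : (x : ℂ) ∈ T := by
    constructor
    · simp only [Set.mem_setOf_eq, ofReal_re]; linarith
    · rw [Metric.mem_ball, dist_zero_right, Complex.norm_real, Real.norm_eq_abs,
        abs_of_pos h0]; linarith
  have h2T : (2 : ℂ) ∈ T := by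
    constructor
    · simp only [Set.mem_setOf_eq]; norm_num; linarith
    · rw [Metric.mem_ball, dist_zero_right]; norm_num
  set u : ℕ → ℝ := fun k => (2 * k + 1 : ℝ) ^ (-a) * ((2 * k + 1 : ℝ)⁻¹ * 10) with hu
  have hmk : ∀ k : ℕ, (1 : ℝ) ≤ 2 * k + 1 := by
    intro k; have : (0:ℝ) ≤ (k:ℝ) := Nat.cast_nonneg k; linarith
  have hbound : ∀ (k : ℕ), ∀ s ∈ T, ‖gpair k s‖ ≤ u k := by
    intro k s hsT
    exact pair_bound ha0.le hsT.1 (le_of_lt (by simpa [dist_zero_right] using hsT.2)) (hmk k)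
  have hu_sum : Summable u := by
    have hv : Summable (fun k : ℕ => 10 * ((k : ℝ) + 1) ^ (-a - 1)) := by
      have := (Real.summable_nat_rpow (p := -a - 1)).mpr (by linarith)
      have h' := (summable_nat_add_iff (f := fun n : ℕ => (n : ℝ) ^ (-a - 1)) 1).mpr this
      refine Summable.mul_left 10 ?_
      convert h' using 2 with k
      · rfl
      push_cast; rfl
    refine hv.of_nonneg_of_le (fun k => ?_) (fun k => ?_)
    · have := hmk k
      positivity
    · have hk1 : (0:ℝ) < (k:ℝ) + 1 := by positivity
      have hle : (k : ℝ) + 1 ≤ 2 * k + 1 := by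
        have : (0:ℝ) ≤ (k:ℝ) := Nat.cast_nonneg k; linarith
      have e1 : (2 * (k:ℝ) + 1) ^ (-a) ≤ ((k:ℝ) + 1) ^ (-a) :=
        Real.rpow_le_rpow_of_nonpos hk1 hle (neg_nonpos.mpr ha0.le)
      have e2 : (2 * (k:ℝ) + 1)⁻¹ ≤ ((k:ℝ) + 1)⁻¹ := inv_anti₀ hk1 hle
      have : u k ≤ ((k:ℝ) + 1) ^ (-a) * (((k:ℝ) + 1)⁻¹ * 10) := by
        rw [hu]
        apply mul_le_mul e1 (by linarith) (by positivity)
          (Real.rpow_nonneg hk1.le _)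
      refine this.trans (le_of_eq ?_)
      rw [show ((k:ℝ)+1) ^ (-a - 1) = ((k:ℝ)+1) ^ (-a) * ((k:ℝ)+1) ^ (-(1:ℝ)) by
        rw [← Real.rpow_add hk1]; ring_nf, Real.rpow_neg_one]
      ring
  set G : ℂ → ℂ := fun s => ∑' k, gpair k s with hG
  have hGdiff : DifferentiableOn ℂ G T := by
    refine (tendstoUniformlyOn_tsum hu_sum hbound).tendstoLocallyUniformlyOn.differentiableOn
      (Filter.Eventually.of_forall fun N => ?_) hTopen
    refine (Differentiable.fun_sum fun k _ => ?_).differentiableOn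
    have hne1 : ((2 * (k:ℝ) + 1 : ℝ) : ℂ) ≠ 0 := by
      rw [Complex.ofReal_ne_zero]; have := hmk k; linarith
    have hne2 : ((2 * (k:ℝ) + 1 + 1 : ℝ) : ℂ) ≠ 0 := by
      rw [Complex.ofReal_ne_zero]; have := hmk k; linarith
    exact ((differentiable_neg.const_cpow (.inl hne1)).sub
      (differentiable_neg.const_cpow (.inl hne2)))
  have hEq : Set.EqOn G (ZMod.LFunction phi2) T := by
    have hL : AnalyticOnNhd ℂ (ZMod.LFunction phi2) T :=
      (ZMod.differentiable_LFunction_of_sum_zero phi2_sum).differentiableOn.analyticOnNhd hTopen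
    have hGa : AnalyticOnNhd ℂ G T := hGdiff.analyticOnNhd hTopen
    refine hGa.eqOn_of_preconnected_of_eventuallyEq hL hTconv.isPreconnected h2T ?_
    refine Filter.eventually_of_mem
      ((continuous_re.isOpen_preimage _ isOpen_Ioi).mem_nhds (by norm_num : 1 < (2:ℂ).re))
      (fun t (ht : 1 < t.re) => ?_)
    calc G t = (1 - 2 ^ ((1:ℂ) - t)) * riemannZeta t := (gpair_hasSum ht).tsum_eq
      _ = LSeries (fun n => phi2 n) t := ((hasSum_phi2 ht).tsum_eq).symm
      _ = ZMod.LFunction phi2 t := (ZMod.LFunction_eq_LSeries _ ht).symm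
  set r : ℕ → ℝ := fun k => (2 * k + 1 : ℝ) ^ (-x) - (2 * k + 2 : ℝ) ^ (-x) with hr
  have hcast : ∀ k, ((r k : ℝ) : ℂ) = gpair k (x : ℂ) := by
    intro k
    rw [hr, gpair, ofReal_sub,
      Complex.ofReal_cpow (by have := hmk k; linarith) (-x),
      Complex.ofReal_cpow (by have := hmk k; linarith) (-x)]
    push_cast
    ring_nf
  have hgsum : Summable (fun k => gpair k (x : ℂ)) :=
    Summable.of_norm_bounded hu_sum (fun k => hbound k _ hxT)
  have hrsum : Summable r := by
    rw [← Complex.summable_ofReal]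
    exact hgsum.congr fun k => (hcast k).symm ▸ rfl
  have hGx : G (x : ℂ) = ((∑' k, r k : ℝ) : ℂ) := by
    rw [hG, Complex.ofReal_tsum]
    exact tsum_congr fun k => (hcast k).symm
  have hrpos : 0 < ∑' k, r k := by
    refine Summable.tsum_pos hrsum (fun k => ?_) 0 ?_
    · simp only [hr]
      have h21 : (0:ℝ) < 2 * k + 1 := by have := hmk k; linarith
      have := Real.rpow_le_rpow_of_nonpos h21 (by linarith : (2*(k:ℝ)+1) ≤ 2*k+2)
        (neg_nonpos.mpr h0.le)
      linarith
    · simp only [hr]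
      have e2 : (2:ℝ) ^ (-x) < 1 :=
        Real.rpow_lt_one_of_one_lt_of_neg (by norm_num) (by linarith)
      norm_num [Real.one_rpow]
      convert e2 using 2 <;> norm_num
  refine ⟨∑' k, r k, hrpos, ?_⟩
  rw [← hEq hxT, hGx]

lemma zetaRealPos {y : ℝ} (hy : 1 < y) :
    ∃ r : ℝ, 0 < r ∧ riemannZeta (y : ℂ) = (r : ℂ) := by
  have hyc : 1 < (y : ℂ).re := by simpa using hy
  have hz := zeta_eq_tsum_one_div_nat_add_one_cpow hyc
  set p : ℕ → ℝ := fun n => 1 / ((n : ℝ) + 1) ^ y with hp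
  have hcast : ∀ n : ℕ, ((p n : ℝ) : ℂ) = 1 / ((n : ℂ) + 1) ^ (y : ℂ) := by
    intro n
    rw [hp]
    push_cast
    rw [Complex.ofReal_cpow (by positivity) y]
    push_cast
    norm_num
  have hsum : Summable p := by
    have h1 := (Real.summable_one_div_nat_rpow (p := y)).mpr hy
    have h2 := (summable_nat_add_iff (f := fun n : ℕ => 1 / (n : ℝ) ^ y) 1).mpr h1
    refine h2.congr fun n => ?_
    rw [hp]
    push_cast
    ring_nf
  refine ⟨∑' n, p n, Summable.tsum_pos hsum (fun n => by positivity) 0 (by positivity), ?_⟩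
  rw [hz, Complex.ofReal_tsum]
  exact (tsum_congr fun n => (hcast n)).symm

/-- For real `s` with `-1 < s < 1`, the Riemann zeta value `ζ(s)` is a negative real
number: it has zero imaginary part and negative real part. -/
theorem stmt_11 (s : ℝ) (h1 : -1 < s) (h2 : s < 1) :
    (riemannZeta (s : ℂ)).im = 0 ∧ (riemannZeta (s : ℂ)).re < 0 := by
  rcases lt_trichotomy s 0 with hneg | hzero | hpos
  · -- case -1 < s < 0 : functional equation
    have hfe := riemannZeta_one_sub (s := (((1 - s : ℝ)) : ℂ))
      (fun n => ?_) ?_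
    · have hL : ((1 : ℂ) - ((1 - s : ℝ) : ℂ)) = (s : ℂ) := by push_cast; ring
      rw [hL] at hfe
      obtain ⟨r, hr, hζ⟩ := zetaRealPos (by linarith : (1:ℝ) < 1 - s)
      have hA : ((2 : ℂ) * (Real.pi : ℂ)) ^ (-((1 - s : ℝ) : ℂ))
          = (((2 * Real.pi) ^ (s - 1) : ℝ) : ℂ) := by
        rw [Complex.ofReal_cpow (by positivity) (s - 1)]
        push_cast
        ring_nf
      have hΓ : Complex.Gamma (((1 - s : ℝ)) : ℂ) = ((Real.Gamma (1 - s) : ℝ) : ℂ) :=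
        Complex.Gamma_ofReal (1 - s)
      have hcos : Complex.cos ((Real.pi : ℂ) * ((1 - s : ℝ) : ℂ) / 2)
          = ((Real.cos (Real.pi * (1 - s) / 2) : ℝ) : ℂ) := by
        rw [Complex.ofReal_cos]
        push_cast
        ring_nf
      rw [hfe, hΓ, hcos, hζ]
      rw [show ((2:ℂ) * (2 * (Real.pi:ℂ)) ^ (-(((1 - s : ℝ)) : ℂ)) *
          ((Real.Gamma (1 - s) : ℝ) : ℂ) * ((Real.cos (Real.pi * (1 - s) / 2) : ℝ) : ℂ) * (r : ℂ))
          = ((2 * (2 * Real.pi) ^ (s - 1) * Real.Gamma (1 - s) * Real.cos (Real.pi * (1 - s) / 2)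
            * r : ℝ) : ℂ) by rw [hA]; push_cast; ring]
      constructor
      · exact Complex.ofReal_im _
      · simp only [Complex.ofReal_re]
        have hπ := Real.pi_pos
        have hcosneg : Real.cos (Real.pi * (1 - s) / 2) < 0 := by
          apply Real.cos_neg_of_pi_div_two_lt_of_lt <;> nlinarith
        have hApos : (0:ℝ) < (2 * Real.pi) ^ (s - 1) := Real.rpow_pos_of_pos (by linarith) _
        have hΓpos : 0 < Real.Gamma (1 - s) := Real.Gamma_pos_of_pos (by linarith)
        have h3 : (0:ℝ) < 2 * (2 * Real.pi) ^ (s - 1) * Real.Gamma (1 - s) := by positivity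
        have := mul_neg_of_neg_of_pos (mul_neg_of_pos_of_neg h3 hcosneg) hr
        linarith
    · intro hcontra
      have := congrArg Complex.re hcontra
      simp at this
      have : (0:ℝ) ≤ n := Nat.cast_nonneg n
      linarith
    · intro hcontra
      have := congrArg Complex.re hcontra
      simp at this
      linarith
  · -- case s = 0
    subst hzero
    rw [show (((0:ℝ)) : ℂ) = 0 by norm_num, riemannZeta_zero]
    norm_num
  · -- case 0 < s < 1 : eta function
    obtain ⟨r, hr, hLF⟩ := eta_pos hpos h2
    have hs1 : (s : ℂ) ≠ 1 := by
      intro h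
      rw [show (1:ℂ) = ((1:ℝ):ℂ) by norm_num] at h
      exact absurd (Complex.ofReal_inj.mp h) (by linarith)
    have hfac := etaFactor hs1
    set c : ℝ := 1 - (2:ℝ) ^ (1 - s) with hc
    have hcC : (1 - 2 ^ ((1:ℂ) - (s:ℂ))) = ((c : ℝ) : ℂ) := by
      rw [hc]
      push_cast
      rw [Complex.ofReal_cpow (by norm_num : (0:ℝ) ≤ 2) (1 - s)]
      push_cast
      ring_nf
    have hcneg : c < 0 := by
      rw [hc]
      have : (1:ℝ) < 2 ^ (1 - s) := by
        rw [show (1:ℝ) < 2 ^ (1-s) ↔ _ from Real.one_lt_rpow_iff_of_pos (by norm_num)]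
        left
        exact ⟨by norm_num, by linarith⟩
      linarith
    have hzeta : riemannZeta (s : ℂ) = ((r / c : ℝ) : ℂ) := by
      have hcne : ((c:ℝ):ℂ) ≠ 0 := by
        rw [Complex.ofReal_ne_zero]; exact hcneg.ne
      have : ((c:ℝ):ℂ) * riemannZeta (s:ℂ) = ((r:ℝ):ℂ) := by
        rw [← hcC, ← hfac, hLF]
      field_simp [hcne] at this ⊢
      rw [Complex.ofReal_div, ← this]; field_simp
    rw [hzeta]
    refine ⟨Complex.ofReal_im _, ?_⟩
    simp only [Complex.ofReal_re]
    exact div_neg_of_pos_of_neg hr hcneg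
end

section
/- Let p(x,t) = t/(π(t² + x²)). For every t > 0 and every x ∈ ℝ, the function y ↦ (p(x+y,t) + p(x−y,t) − 2p(x,t))/y² is integrable on (0,∞) and the partial derivative of p with respect to t satisfies ∂p/∂t(x,t) = (1/π) ∫₀^∞ (p(x+y,t) + p(x−y,t) − 2p(x,t))/y² dy. (This is the verification that the Cauchy density solves the nonlocal Fokker-Planck equation with d = 0, f = 0, ε = 1 and α = 1, where the fractional Laplacian term is written in symmetrized integral form.) -/
open MeasureTheory Filter Topology

/-- The Cauchy density `p(x,t) = t/(π(t² + x²))`. -/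
noncomputable def cauchyP (x t : ℝ) : ℝ := t / (Real.pi * (t ^ 2 + x ^ 2))

/-- Antiderivative of the symmetrized nonlocal integrand for the Cauchy density. -/
noncomputable def Faux (t x y : ℝ) : ℝ :=
  t*x/(Real.pi*(t^2+x^2)^2) * (Real.log (t^2+(x+y)^2) - Real.log (t^2+(x-y)^2))
  + (x^2-t^2)/(Real.pi*(t^2+x^2)^2) * (Real.arctan ((x+y)/t) - Real.arctan ((x-y)/t))

theorem Faux_deriv (t x : ℝ) (ht : 0 < t) (y : ℝ) :
    HasDerivAt (Faux t x)
      (t*x/(Real.pi*(t^2+x^2)^2) * (2*(x+y)/(t^2+(x+y)^2) + 2*(x-y)/(t^2+(x-y)^2))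
        + (x^2-t^2)/(Real.pi*(t^2+x^2)^2) * (t/(t^2+(x+y)^2) + t/(t^2+(x-y)^2))) y := by
  have h1 : (0:ℝ) < t^2+(x+y)^2 := by positivity
  have h2 : (0:ℝ) < t^2+(x-y)^2 := by positivity
  have hu1 : HasDerivAt (fun y : ℝ => t^2+(x+y)^2) (2*(x+y)) y := by
    have := (((hasDerivAt_id y).const_add x).pow 2).const_add (t^2)
    simpa using this
  have hu2 : HasDerivAt (fun y : ℝ => t^2+(x-y)^2) (-(2*(x-y))) y := by
    have := (((hasDerivAt_id y).const_sub x).pow 2).const_add (t^2)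
    refine this.congr_deriv ?_
    simp
  have hlog1 : HasDerivAt (fun y : ℝ => Real.log (t^2+(x+y)^2)) (2*(x+y)/(t^2+(x+y)^2)) y := by
    have := (Real.hasDerivAt_log h1.ne').comp y hu1
    refine this.congr_deriv ?_
    field_simp
  have hlog2 : HasDerivAt (fun y : ℝ => Real.log (t^2+(x-y)^2)) (-(2*(x-y))/(t^2+(x-y)^2)) y := by
    have := (Real.hasDerivAt_log h2.ne').comp y hu2
    refine this.congr_deriv ?_
    field_simp
  have hv1 : HasDerivAt (fun y : ℝ => (x+y)/t) (1/t) y := by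
    have := ((hasDerivAt_id y).const_add x).div_const t
    simpa using this
  have hv2 : HasDerivAt (fun y : ℝ => (x-y)/t) (-(1/t)) y := by
    have := ((hasDerivAt_id y).const_sub x).div_const t
    refine this.congr_deriv ?_
    ring
  have ha1 : HasDerivAt (fun y : ℝ => Real.arctan ((x+y)/t)) (t/(t^2+(x+y)^2)) y := by
    have := (Real.hasDerivAt_arctan ((x+y)/t)).comp y hv1
    refine this.congr_deriv ?_
    field_simp
  have ha2 : HasDerivAt (fun y : ℝ => Real.arctan ((x-y)/t)) (-(t/(t^2+(x-y)^2))) y := by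
    have := (Real.hasDerivAt_arctan ((x-y)/t)).comp y hv2
    refine this.congr_deriv ?_
    field_simp
  have := ((hlog1.sub hlog2).const_mul (t*x/(Real.pi*(t^2+x^2)^2))).add
    ((ha1.sub ha2).const_mul ((x^2-t^2)/(Real.pi*(t^2+x^2)^2)))
  refine this.congr_deriv ?_
  ring

theorem Faux_deriv_eq (t x y : ℝ) (ht : 0 < t) (hy : y ≠ 0) :
    t*x/(Real.pi*(t^2+x^2)^2) * (2*(x+y)/(t^2+(x+y)^2) + 2*(x-y)/(t^2+(x-y)^2))
      + (x^2-t^2)/(Real.pi*(t^2+x^2)^2) * (t/(t^2+(x+y)^2) + t/(t^2+(x-y)^2))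
    = (cauchyP (x + y) t + cauchyP (x - y) t - 2 * cauchyP x t) / y ^ 2 := by
  have hπ := Real.pi_pos
  have h1 : (0:ℝ) < t^2+(x+y)^2 := by positivity
  have h2 : (0:ℝ) < t^2+(x-y)^2 := by positivity
  have h3 : (0:ℝ) < t^2+x^2 := by positivity
  simp only [cauchyP]
  field_simp
  ring

theorem integrand_simp (t x y : ℝ) (ht : 0 < t) (hy : y ≠ 0) :
    (cauchyP (x + y) t + cauchyP (x - y) t - 2 * cauchyP x t) / y ^ 2
    = (2*t*(3*x^2 - t^2 - y^2)) /
        (Real.pi * ((t^2+x^2) * ((t^2+(x+y)^2) * (t^2+(x-y)^2)))) := by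
  have hπ := Real.pi_pos
  have h1 : (0:ℝ) < t^2+(x+y)^2 := by positivity
  have h2 : (0:ℝ) < t^2+(x-y)^2 := by positivity
  have h3 : (0:ℝ) < t^2+x^2 := by positivity
  simp only [cauchyP]
  field_simp
  ring

theorem integrand_bound (t x y : ℝ) (ht : 0 < t) :
    |(2*t*(3*x^2 - t^2 - y^2)) /
        (Real.pi * ((t^2+x^2) * ((t^2+(x+y)^2) * (t^2+(x-y)^2))))|
      ≤ (2*((t^2+x^2)+1)/(t*(t^2+x^2))) * (1 + y^2)⁻¹ := by
  have hπ : (3:ℝ) ≤ Real.pi := Real.pi_gt_three.le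
  have h1 : (0:ℝ) < t^2+(x+y)^2 := by positivity
  have h2 : (0:ℝ) < t^2+(x-y)^2 := by positivity
  have h3 : (0:ℝ) < t^2+x^2 := by positivity
  have hd : (0:ℝ) < Real.pi * ((t^2+x^2) * ((t^2+(x+y)^2) * (t^2+(x-y)^2))) := by positivity
  have hy1 : (0:ℝ) < 1 + y^2 := by positivity
  have key : t^2 * ((t^2+x^2)+y^2)^2 ≤
      (t^2+x^2) * ((t^2+(x+y)^2) * (t^2+(x-y)^2)) := by
    nlinarith [sq_nonneg (x*((t^2+x^2) - y^2))]
  have hN : |3*x^2 - t^2 - y^2| ≤ 3*((t^2+x^2)+y^2) := by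
    rw [abs_le]; constructor <;> nlinarith [sq_nonneg x, sq_nonneg y, sq_nonneg t]
  have h5 : (t^2+x^2)*(1+y^2) ≤ ((t^2+x^2)+1)*((t^2+x^2)+y^2) := by nlinarith [sq_nonneg y]
  have expand : (2*((t^2+x^2)+1)/(t*(t^2+x^2))) * (1 + y^2)⁻¹
        * (Real.pi * ((t^2+x^2) * ((t^2+(x+y)^2) * (t^2+(x-y)^2))))
      = (2*((t^2+x^2)+1) * (Real.pi * ((t^2+(x+y)^2) * (t^2+(x-y)^2))))
        / (t * (1+y^2)) := by
    field_simp
  rw [abs_div, abs_of_pos hd, div_le_iff₀ hd, expand, le_div_iff₀ (by positivity)]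
  have habs : |2*t*(3*x^2 - t^2 - y^2)| = 2*t*|3*x^2 - t^2 - y^2| := by
    rw [abs_mul, abs_of_pos (by positivity : (0:ℝ) < 2*t)]
  rw [habs]
  calc 2*t*|3*x^2 - t^2 - y^2| * (t * (1+y^2))
      ≤ 2*t*(3*((t^2+x^2)+y^2)) * (t * (1+y^2)) := by gcongr
    _ = 6*t^2*((t^2+x^2)*(1+y^2))*((t^2+x^2)+y^2) / (t^2+x^2) := by field_simp; ring
    _ ≤ 6*t^2*(((t^2+x^2)+1)*((t^2+x^2)+y^2))*((t^2+x^2)+y^2) / (t^2+x^2) := by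
        gcongr
    _ = 2*((t^2+x^2)+1)*(3*(t^2*(((t^2+x^2)+y^2))^2)) / (t^2+x^2) := by ring
    _ ≤ 2*((t^2+x^2)+1)*(3*((t^2+x^2) * ((t^2+(x+y)^2) * (t^2+(x-y)^2)))) / (t^2+x^2) := by
        gcongr
    _ = 2*((t^2+x^2)+1)*(3*((t^2+(x+y)^2) * (t^2+(x-y)^2))) := by field_simp
    _ ≤ 2*((t^2+x^2)+1)*(Real.pi*((t^2+(x+y)^2) * (t^2+(x-y)^2))) := by gcongr

theorem Faux_tendsto (t x : ℝ) (ht : 0 < t) :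
    Tendsto (Faux t x) atTop (𝓝 ((x^2-t^2)/(t^2+x^2)^2)) := by
  have hπ := Real.pi_pos
  have h3 : (0:ℝ) < t^2+x^2 := by positivity
  -- log part tends to 0
  have ht1 : Tendsto (fun y : ℝ => t/y) atTop (𝓝 0) := tendsto_const_nhds.div_atTop tendsto_id
  have hx1 : Tendsto (fun y : ℝ => x/y) atTop (𝓝 0) := tendsto_const_nhds.div_atTop tendsto_id
  have hnum : Tendsto (fun y : ℝ => (t/y)^2 + (x/y+1)^2) atTop (𝓝 1) := by
    have := ((ht1.pow 2).add (((hx1.add_const 1)).pow 2))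
    norm_num at this
    exact this
  have hden : Tendsto (fun y : ℝ => (t/y)^2 + (x/y-1)^2) atTop (𝓝 1) := by
    have := ((ht1.pow 2).add (((hx1.sub_const 1)).pow 2))
    norm_num at this
    exact this
  have hratio : Tendsto (fun y : ℝ => (t^2+(x+y)^2)/(t^2+(x-y)^2)) atTop (𝓝 1) := by
    have h := hnum.div hden one_ne_zero
    norm_num at h
    apply h.congr'
    filter_upwards [eventually_gt_atTop (0:ℝ)] with y hy
    have h2 : (0:ℝ) < t^2+(x-y)^2 := by positivity
    have hdy : (0:ℝ) < (t/y)^2 + (x/y-1)^2 := by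
      have : t/y ≠ 0 := div_ne_zero ht.ne' hy.ne'
      positivity
    simp only [Pi.div_apply]
    rw [div_eq_div_iff hdy.ne' h2.ne']
    field_simp
  have hlog : Tendsto (fun y : ℝ =>
      Real.log (t^2+(x+y)^2) - Real.log (t^2+(x-y)^2)) atTop (𝓝 0) := by
    have hcomp := (Real.continuousAt_log one_ne_zero).tendsto.comp hratio
    rw [Real.log_one] at hcomp
    apply hcomp.congr
    intro y
    have h1 : (0:ℝ) < t^2+(x+y)^2 := by positivity
    have h2 : (0:ℝ) < t^2+(x-y)^2 := by positivity
    simp [Function.comp, Real.log_div h1.ne' h2.ne']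
  -- arctan part tends to π
  have harg1 : Tendsto (fun y : ℝ => (x+y)/t) atTop atTop :=
    (tendsto_atTop_add_const_left _ x tendsto_id).atTop_div_const ht
  have harg2 : Tendsto (fun y : ℝ => (x-y)/t) atTop atBot := by
    apply Tendsto.atBot_div_const ht
    have : Tendsto (fun y : ℝ => x + -y) atTop atBot :=
      tendsto_atBot_add_const_left _ x tendsto_neg_atTop_atBot
    exact this.congr fun y => (sub_eq_add_neg x y).symm
  have ha1 : Tendsto (fun y : ℝ => Real.arctan ((x+y)/t)) atTop (𝓝 (Real.pi/2)) :=
    (Real.tendsto_arctan_atTop.mono_right nhdsWithin_le_nhds).comp harg1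
  have ha2 : Tendsto (fun y : ℝ => Real.arctan ((x-y)/t)) atTop (𝓝 (-(Real.pi/2))) :=
    (Real.tendsto_arctan_atBot.mono_right nhdsWithin_le_nhds).comp harg2
  have harct : Tendsto (fun y : ℝ =>
      Real.arctan ((x+y)/t) - Real.arctan ((x-y)/t)) atTop (𝓝 Real.pi) := by
    have := ha1.sub ha2
    rw [show Real.pi/2 - -(Real.pi/2) = Real.pi by ring] at this
    exact this
  have := (hlog.const_mul (t*x/(Real.pi*(t^2+x^2)^2))).add
    (harct.const_mul ((x^2-t^2)/(Real.pi*(t^2+x^2)^2)))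
  have heq : (x^2-t^2)/(t^2+x^2)^2
      = t*x/(Real.pi*(t^2+x^2)^2) * 0 + (x^2-t^2)/(Real.pi*(t^2+x^2)^2) * Real.pi := by
    field_simp
    ring
  rw [heq]
  exact this

/-- The Cauchy density solves the nonlocal Fokker-Planck equation with `d = 0`, `f = 0`,
`ε = 1`, `α = 1`: the symmetrized nonlocal integrand is integrable on `(0,∞)` and
`∂p/∂t = (1/π) ∫₀^∞ (p(x+y,t) + p(x−y,t) − 2p(x,t))/y² dy`. -/
theorem stmt_13 (t x : ℝ) (ht : 0 < t) :
    IntegrableOn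
        (fun y : ℝ => (cauchyP (x + y) t + cauchyP (x - y) t - 2 * cauchyP x t) / y ^ 2)
        (Set.Ioi 0) ∧
    deriv (fun s : ℝ => cauchyP x s) t =
      (1 / Real.pi) *
        ∫ y in Set.Ioi (0 : ℝ),
          (cauchyP (x + y) t + cauchyP (x - y) t - 2 * cauchyP x t) / y ^ 2 := by
  have hπ := Real.pi_pos
  have h3 : (0:ℝ) < t^2+x^2 := by positivity
  -- integrability
  have hcont : Continuous (fun y : ℝ => (2*t*(3*x^2 - t^2 - y^2)) /
      (Real.pi * ((t^2+x^2) * ((t^2+(x+y)^2) * (t^2+(x-y)^2))))) := by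
    apply Continuous.div (by fun_prop) (by fun_prop)
    intro y
    positivity
  have hbint : Integrable (fun y : ℝ => (2*((t^2+x^2)+1)/(t*(t^2+x^2))) * (1 + y^2)⁻¹) :=
    integrable_inv_one_add_sq.const_mul _
  have hint : Integrable (fun y : ℝ => (2*t*(3*x^2 - t^2 - y^2)) /
      (Real.pi * ((t^2+x^2) * ((t^2+(x+y)^2) * (t^2+(x-y)^2))))) := by
    apply hbint.mono' hcont.aestronglyMeasurable
    filter_upwards with y
    rw [Real.norm_eq_abs]
    exact integrand_bound t x y ht
  have hIntOn : IntegrableOn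
      (fun y : ℝ => (cauchyP (x + y) t + cauchyP (x - y) t - 2 * cauchyP x t) / y ^ 2)
      (Set.Ioi 0) := by
    apply (hint.integrableOn).congr_fun _ measurableSet_Ioi
    intro y hy
    exact (integrand_simp t x y ht (ne_of_gt hy)).symm
  refine ⟨hIntOn, ?_⟩
  -- the integral
  have hF0 : Faux t x 0 = 0 := by
    simp [Faux]
  have hintval : ∫ y in Set.Ioi (0:ℝ),
      (cauchyP (x + y) t + cauchyP (x - y) t - 2 * cauchyP x t) / y ^ 2
      = (x^2-t^2)/(t^2+x^2)^2 := by
    have := integral_Ioi_of_hasDerivAt_of_tendsto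
      (f := Faux t x)
      (f' := fun y => (cauchyP (x + y) t + cauchyP (x - y) t - 2 * cauchyP x t) / y ^ 2)
      (a := 0) (m := (x^2-t^2)/(t^2+x^2)^2)
      ((Faux_deriv t x ht 0).continuousAt.continuousWithinAt)
      (fun y hy => by
        have h := Faux_deriv t x ht y
        rwa [Faux_deriv_eq t x y ht (ne_of_gt hy)] at h)
      hIntOn (Faux_tendsto t x ht)
    rw [this, hF0, sub_zero]
  rw [hintval]
  -- the time derivative
  have hden : HasDerivAt (fun s : ℝ => Real.pi * (s^2 + x^2)) (Real.pi * (2*t)) t := by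
    have := ((hasDerivAt_pow 2 t).add_const (x^2)).const_mul Real.pi
    simpa using this
  have hD : HasDerivAt (fun s : ℝ => cauchyP x s) ((x^2-t^2)/(Real.pi*(t^2+x^2)^2)) t := by
    have hne : Real.pi * (t^2 + x^2) ≠ 0 := by positivity
    have := (hasDerivAt_id t).div hden hne
    simp only [cauchyP]
    refine this.congr_deriv ?_
    field_simp
    simp only [id]; ring
  rw [hD.deriv]
  field_simp
end

section
/- The function α ↦ 2 C_α (1 + 1/α − ζ(α−1)) tends to 2 as α tends to 2 from the left; equivalently, the maximum-principle threshold 1/(2 C_α (1 + 1/α − ζ(α−1))) tends to 1/2 as α → 2⁻. -/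
open scoped BigOperators

open Filter Real Set Topology

/-- The zeta residue part: `(α-2) ζ(α-1) → 1` as `α → 2⁻`. -/
lemma zeta_part :
    Tendsto (fun α : ℝ => (α - 2) * zetaR (α - 1)) (𝓝[<] (2:ℝ)) (𝓝 1) := by
  have h0 : Tendsto (fun α : ℝ => ((α : ℂ) - 1)) (𝓝[<] (2:ℝ)) (𝓝[≠] (1:ℂ)) := by
    apply tendsto_nhdsWithin_of_tendsto_nhds_of_eventually_within
    · have hc : Continuous fun α : ℝ => ((α : ℂ) - 1) := by continuity
      have := hc.tendsto (2:ℝ)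
      have h2 : ((2:ℝ):ℂ) - 1 = 1 := by norm_num
      rw [h2] at this
      exact this.mono_left nhdsWithin_le_nhds
    · filter_upwards [self_mem_nhdsWithin] with α hα
      simp only [Set.mem_compl_iff, Set.mem_singleton_iff]
      intro h
      have : (α : ℂ) = 2 := by
        have := sub_eq_iff_eq_add.mp h
        norm_num at this ⊢
        exact this
      have h22 : α = 2 := by exact_mod_cast this
      rw [h22] at hα
      exact absurd hα (by simp)
  have h1 := riemannZeta_residue_one.comp h0
  have h2 := (Complex.continuous_re.tendsto 1).comp h1
  have h3 : ((1:ℂ)).re = 1 := by simp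
  rw [h3] at h2
  refine h2.congr fun α => ?_
  simp only [Function.comp_apply, zetaR]
  have e1 : ((α : ℂ) - 1) - 1 = ((α - 2 : ℝ) : ℂ) := by push_cast; ring
  have e2 : ((α : ℂ) - 1) = ((α - 1 : ℝ) : ℂ) := by push_cast; ring
  rw [e1, e2, Complex.re_ofReal_mul]

/-- As `α → 2⁻`, the quantity `2 C_α (1 + 1/α − ζ(α−1))` tends to `2`; equivalently
the maximum-principle threshold `1/(2 C_α (1 + 1/α − ζ(α−1)))` tends to `1/2`. -/
theorem stmt_15 :
    Filter.Tendsto (fun α : ℝ => 2 * Cconst α * (1 + 1 / α - zetaR (α - 1)))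
        (nhdsWithin 2 (Set.Iio 2)) (nhds 2) ∧
    Filter.Tendsto (fun α : ℝ => 1 / (2 * Cconst α * (1 + 1 / α - zetaR (α - 1))))
        (nhdsWithin 2 (Set.Iio 2)) (nhds (1 / 2)) := by
  -- The rescaled constant A α = 2 C_α / (2 - α), extended continuously.
  set A : ℝ → ℝ := fun α => 2 * α * Real.Gamma ((1 + α) / 2) /
    (2 * (2 : ℝ) ^ (1 - α) * Real.sqrt Real.pi * Real.Gamma (2 - α / 2)) with hA
  have sqrt_pi_pos : (0:ℝ) < Real.sqrt Real.pi := Real.sqrt_pos.mpr Real.pi_pos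
  -- A is continuous at 2 with value 2.
  have hAcont : Tendsto A (𝓝[<] (2:ℝ)) (𝓝 2) := by
    have hG1 : ContinuousAt Real.Gamma ((1 + 2) / 2 : ℝ) :=
      (Real.differentiableAt_Gamma (fun m => by
        intro h; have : (0:ℝ) ≤ m := m.cast_nonneg; norm_num at h; linarith)).continuousAt
    have hG2 : ContinuousAt Real.Gamma ((2:ℝ) - 2 / 2) :=
      (Real.differentiableAt_Gamma (fun m => by
        intro h; have : (0:ℝ) ≤ m := m.cast_nonneg; norm_num at h; linarith)).continuousAt
    have hf1 : ContinuousAt (fun α : ℝ => (1 + α) / 2) 2 :=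
      (continuousAt_const.add continuousAt_id).div_const 2
    have hf2 : ContinuousAt (fun α : ℝ => 2 - α / 2) 2 :=
      continuousAt_const.sub (continuousAt_id.div_const 2)
    have hc1 : ContinuousAt (fun α : ℝ => Real.Gamma ((1 + α) / 2)) 2 :=
      ContinuousAt.comp (g := Real.Gamma) (f := fun α : ℝ => (1 + α) / 2) (x := 2) hG1 hf1
    have hc2 : ContinuousAt (fun α : ℝ => Real.Gamma (2 - α / 2)) 2 :=
      ContinuousAt.comp (g := Real.Gamma) (f := fun α : ℝ => 2 - α / 2) (x := 2) hG2 hf2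
    have hrpow : ContinuousAt (fun α : ℝ => (2:ℝ) ^ (1 - α)) 2 := by
      have h := Real.continuousAt_const_rpow (b := (1 - (2:ℝ))) (two_ne_zero (α := ℝ))
      exact h.comp (continuousAt_const.sub continuousAt_id)
    have hdenom : ContinuousAt (fun α : ℝ =>
        2 * (2 : ℝ) ^ (1 - α) * Real.sqrt Real.pi * Real.Gamma (2 - α / 2)) 2 := by
      exact ((continuousAt_const.mul hrpow).mul continuousAt_const).mul hc2
    have hdenom_ne : (2 * (2 : ℝ) ^ (1 - (2:ℝ)) * Real.sqrt Real.pi *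
        Real.Gamma (2 - (2:ℝ) / 2)) ≠ 0 := by
      have h1 : (0:ℝ) < (2:ℝ) ^ (1 - (2:ℝ)) := Real.rpow_pos_of_pos two_pos _
      have h2 : (0:ℝ) < Real.Gamma (2 - (2:ℝ) / 2) := by
        apply Real.Gamma_pos_of_pos; norm_num
      positivity
    have hAct : ContinuousAt A 2 := by
      apply ContinuousAt.div
      · exact (continuousAt_const.mul continuousAt_id).mul hc1
      · exact hdenom
      · exact hdenom_ne
    have hval : A 2 = 2 := by
      have hg32 : Real.Gamma ((1 + 2) / 2 : ℝ) = Real.sqrt Real.pi / 2 := by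
        have h12 : ((1 + 2) / 2 : ℝ) = 1/2 + 1 := by norm_num
        rw [h12, Real.Gamma_add_one (by norm_num), Real.Gamma_one_half_eq]
        ring
      have hg1 : Real.Gamma ((2:ℝ) - 2 / 2) = 1 := by norm_num [Real.Gamma_one]
      have hp : (2:ℝ) ^ (1 - (2:ℝ)) = 1 / 2 := by
        rw [show (1 - (2:ℝ)) = -1 by norm_num, Real.rpow_neg_one]; norm_num
      rw [hA]
      simp only [hg32, hg1, hp]
      have : Real.sqrt Real.pi ≠ 0 := ne_of_gt sqrt_pi_pos
      field_simp
    have := hAct.tendsto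
    rw [hval] at this
    exact this.mono_left nhdsWithin_le_nhds
  -- The second factor B tends to 1.
  set B : ℝ → ℝ := fun α => (2 - α) * (1 + 1 / α) + (α - 2) * zetaR (α - 1) with hB
  have hBt : Tendsto B (𝓝[<] (2:ℝ)) (𝓝 1) := by
    have h1 : Tendsto (fun α : ℝ => (2 - α) * (1 + 1 / α)) (𝓝[<] (2:ℝ)) (𝓝 0) := by
      have hc : ContinuousAt (fun α : ℝ => (2 - α) * (1 + 1 / α)) 2 := by
        apply ContinuousAt.mul (by fun_prop)
        exact continuousAt_const.add (continuousAt_const.div continuousAt_id (by norm_num))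
      have hv : (2 - (2:ℝ)) * (1 + 1 / (2:ℝ)) = 0 := by norm_num
      rw [← hv]
      exact hc.tendsto.mono_left nhdsWithin_le_nhds
    have := h1.add zeta_part
    rwa [zero_add] at this
  -- The key identity: for α ∈ (1,2), the function equals A α * B α.
  have hkey : ∀ᶠ α in 𝓝[<] (2:ℝ),
      A α * B α = 2 * Cconst α * (1 + 1 / α - zetaR (α - 1)) := by
    filter_upwards [Ioo_mem_nhdsLT_of_mem (show (2:ℝ) ∈ Ioc 1 2 by norm_num)] with α hα
    obtain ⟨h1, h2⟩ := hα
    have hα0 : α ≠ 0 := by linarith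
    have hx : (1 : ℝ) - α / 2 ≠ 0 := by
      intro h; nlinarith [sub_eq_zero.mp h]
    have hxpos : (0:ℝ) < 1 - α / 2 := by linarith
    have hGeq : Real.Gamma (2 - α / 2) = (1 - α / 2) * Real.Gamma (1 - α / 2) := by
      have := Real.Gamma_add_one hx
      rw [show (1:ℝ) - α / 2 + 1 = 2 - α / 2 by ring] at this
      exact this
    have hGpos : (0:ℝ) < Real.Gamma (1 - α / 2) := Real.Gamma_pos_of_pos hxpos
    have hrp : (0:ℝ) < (2:ℝ) ^ (1 - α) := Real.rpow_pos_of_pos two_pos _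
    have h5 : Real.sqrt Real.pi ≠ 0 := ne_of_gt sqrt_pi_pos
    have h2a : (2:ℝ) - α ≠ 0 := by linarith
    have hC : 2 * Cconst α = A α * (2 - α) := by
      simp only [hA, Cconst, hGeq]
      rw [mul_div_assoc', div_mul_eq_mul_div, div_eq_div_iff (by positivity) (by positivity)]
      ring
    have hBeq : B α = (2 - α) * (1 + 1 / α - zetaR (α - 1)) := by
      simp only [hB]; ring
    rw [hBeq, show A α * ((2 - α) * (1 + 1 / α - zetaR (α - 1)))
        = (A α * (2 - α)) * (1 + 1 / α - zetaR (α - 1)) by ring, ← hC]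
  have hprod := hAcont.mul hBt
  rw [mul_one] at hprod
  have hmain : Tendsto (fun α : ℝ => 2 * Cconst α * (1 + 1 / α - zetaR (α - 1)))
      (𝓝[<] (2:ℝ)) (𝓝 2) := hprod.congr' hkey
  exact ⟨hmain, (tendsto_const_nhds (x := (1:ℝ))).div hmain two_ne_zero⟩
end

section
/- The function α ↦ 2 C_α (1 + 1/α − ζ(α−1)) tends to 1 as α tends to 0 from the right; equivalently, the maximum-principle threshold 1/(2 C_α (1 + 1/α − ζ(α−1))) tends to 1 as α → 0⁺. -/
open scoped BigOperators

lemma aux_tendsto :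
    Filter.Tendsto (fun α : ℝ => 2 * Cconst α * (1 + 1 / α - zetaR (α - 1)))
      (nhdsWithin 0 (Set.Ioi 0)) (nhds 1) := by
  have hz : ContinuousAt (fun α : ℝ => zetaR (α - 1)) 0 := by
    have hd : DifferentiableAt ℂ riemannZeta (((0:ℝ) - 1 : ℝ) : ℂ) :=
      differentiableAt_riemannZeta (by norm_num)
    have hc : ContinuousAt (fun α : ℝ => ((α - 1 : ℝ) : ℂ)) 0 := by fun_prop
    have h1 : ContinuousAt (fun α : ℝ => riemannZeta ((α - 1 : ℝ) : ℂ)) 0 :=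
      ContinuousAt.comp (x := (0:ℝ)) (g := riemannZeta)
        (f := fun α : ℝ => ((α - 1 : ℝ) : ℂ)) hd.continuousAt hc
    exact ContinuousAt.comp (x := (0:ℝ)) (g := Complex.re)
      (f := fun α : ℝ => riemannZeta ((α - 1 : ℝ) : ℂ))
      Complex.continuous_re.continuousAt h1
  have hΓ1 : ContinuousAt (fun α : ℝ => Real.Gamma ((1 + α) / 2)) 0 := by
    refine (Real.differentiableAt_Gamma (fun m => ?_)).continuousAt.comp
      (by fun_prop)
    · show ((1 + (0:ℝ)) / 2) ≠ -(m : ℝ)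
      have : (0:ℝ) ≤ (m : ℝ) := Nat.cast_nonneg m
      norm_num; linarith
  have hΓ2 : ContinuousAt (fun α : ℝ => Real.Gamma (1 - α / 2)) 0 := by
    refine (Real.differentiableAt_Gamma (fun m => ?_)).continuousAt.comp
      (by fun_prop)
    · show ((1:ℝ) - 0 / 2) ≠ -(m : ℝ)
      have : (0:ℝ) ≤ (m : ℝ) := Nat.cast_nonneg m
      norm_num; linarith
  have hpow : ContinuousAt (fun α : ℝ => (2:ℝ) ^ (1 - α)) 0 := by
    apply ContinuousAt.rpow continuousAt_const (by fun_prop)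
    left; norm_num
  have hF : ContinuousAt (fun α : ℝ =>
      2 * Real.Gamma ((1 + α) / 2) /
        ((2 : ℝ) ^ (1 - α) * Real.sqrt Real.pi * Real.Gamma (1 - α / 2)) *
      (α + 1 - α * zetaR (α - 1))) 0 := by
    apply ContinuousAt.mul
    · apply ContinuousAt.div (continuousAt_const.mul hΓ1)
        ((hpow.mul continuousAt_const).mul hΓ2)
      have hπ : Real.sqrt Real.pi ≠ 0 := by positivity
      simp [Real.Gamma_one]
      positivity
    · exact ((continuousAt_id.add continuousAt_const).sub (continuousAt_id.mul hz))
  have hval : 2 * Real.Gamma ((1 + (0:ℝ)) / 2) /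
        ((2 : ℝ) ^ ((1:ℝ) - 0) * Real.sqrt Real.pi * Real.Gamma (1 - (0:ℝ) / 2)) *
      ((0:ℝ) + 1 - 0 * zetaR ((0:ℝ) - 1)) = 1 := by
    have hπ : Real.sqrt Real.pi ≠ 0 := by positivity
    have h12 : ((1:ℝ) + 0) / 2 = 1 / 2 := by norm_num
    have h02 : (1:ℝ) - (0:ℝ) / 2 = 1 := by norm_num
    rw [h12, h02, Real.Gamma_one, Real.Gamma_one_half_eq]
    norm_num [Real.rpow_one]
    exact hπ
  have htend := hF.tendsto
  rw [hval] at htend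
  refine (htend.mono_left nhdsWithin_le_nhds).congr' ?_
  filter_upwards [self_mem_nhdsWithin] with α hα
  have hα0 : (α : ℝ) ≠ 0 := ne_of_gt hα
  rw [Cconst]
  have key : α * (1 + 1 / α - zetaR (α - 1)) = α + 1 - α * zetaR (α - 1) := by
    field_simp
  rw [← key]
  ring


/-- As `α → 0⁺`, the quantity `2 C_α (1 + 1/α − ζ(α−1))` tends to `1`; equivalently
the maximum-principle threshold `1/(2 C_α (1 + 1/α − ζ(α−1)))` tends to `1`. -/
theorem stmt_16 :
    Filter.Tendsto (fun α : ℝ => 2 * Cconst α * (1 + 1 / α - zetaR (α - 1)))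
        (nhdsWithin 0 (Set.Ioi 0)) (nhds 1) ∧
    Filter.Tendsto (fun α : ℝ => 1 / (2 * Cconst α * (1 + 1 / α - zetaR (α - 1))))
        (nhdsWithin 0 (Set.Ioi 0)) (nhds 1) := by
  refine ⟨aux_tendsto, ?_⟩
  have := aux_tendsto.inv₀ (by norm_num)
  simpa [one_div] using this
end
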